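/- arXiv:1110.1158 — 4 statements merged into one kernel-verified Lean document; each statement's English description precedes it below -/
import Mathlib

section
/- Let g ≥ 2 and let π_g be the genus-g surface group. Then the center of π_g is trivial: Subgroup.center π_g = ⊥. -/
open scoped commutatorElement in
/-- The single relator of the genus-`g` surface group:
`∏ i, [aᵢ, bᵢ]` where `aᵢ, bᵢ` are the free generators indexed by `Sum.inl i`, `Sum.inr i`. -/
def surfaceRelator (g : ℕ) : FreeGroup (Fin g ⊕ Fin g) :=
  ((List.finRange g).map fun i =>
    ⁅FreeGroup.of (Sum.inl i : Fin g ⊕ Fin g), FreeGroup.of (Sum.inr i)⁆).prod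

/-- The genus-`g` surface group `π_g`, presented with generators `a₁,…,a_g,b₁,…,b_g`
and the single relator `∏ i, [aᵢ, bᵢ]`. -/
def SurfaceGroup (g : ℕ) : Type :=
  PresentedGroup ({surfaceRelator g} : Set (FreeGroup (Fin g ⊕ Fin g)))

instance (g : ℕ) : Group (SurfaceGroup g) := by unfold SurfaceGroup; infer_instance

open scoped commutatorElement

namespace SGC
open Monoid Function



def pQ : Equiv.Perm ℚ := Equiv.addRight (1 : ℚ)
def mQ : Equiv.Perm ℚ := Equiv.mulRight₀ (2 : ℚ) two_ne_zero

lemma pQ_apply (q : ℚ) : pQ q = q + 1 := rfl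
lemma mQ_apply (q : ℚ) : mQ q = q * 2 := rfl

lemma pQ_inv_apply (q : ℚ) : pQ⁻¹ q = q - 1 := by
  rw [Equiv.Perm.inv_def, Equiv.symm_apply_eq, pQ_apply]; ring

lemma mQ_inv_apply (q : ℚ) : mQ⁻¹ q = q / 2 := by
  rw [Equiv.Perm.inv_def, Equiv.symm_apply_eq, mQ_apply]; ring

lemma comm_pm : ⁅pQ, mQ⁆ = Equiv.addRight (-1 : ℚ) := by
  ext q
  simp only [commutatorElement_def, Equiv.Perm.mul_apply, pQ_apply, mQ_apply,
    pQ_inv_apply, mQ_inv_apply, Equiv.coe_addRight]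
  ring

lemma addRight_zpow (n : ℤ) : ∀ x : ℚ, ((Equiv.addRight (-1 : ℚ)) ^ n) x = x - n := by
  induction n using Int.induction_on with
  | zero => simp
  | succ m ih =>
      intro x
      rw [zpow_add_one, Equiv.Perm.mul_apply, Equiv.coe_addRight, ih]
      push_cast; ring
  | pred m ih =>
      intro x
      rw [zpow_sub_one, Equiv.Perm.mul_apply, ih]
      have : ((Equiv.addRight (-1:ℚ))⁻¹) x = x + 1 := by
        rw [Equiv.Perm.inv_def, Equiv.symm_apply_eq, Equiv.coe_addRight]; ring
      rw [this]; push_cast; ring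

lemma addRight_zpow_eq_one {n : ℤ} (h : (Equiv.addRight (-1 : ℚ)) ^ n = 1) : n = 0 := by
  have := addRight_zpow n 0
  rw [h] at this
  simpa using this.symm




variable (k : ℕ)

/-- Left factor: free group on `a₀, b₀` (indexed by `true`, `false`). -/
abbrev A : Type := FreeGroup Bool
/-- Right factor: free group on `aᵢ, bᵢ`, `1 ≤ i ≤ k+1`. -/
abbrev B : Type := FreeGroup (Bool × Fin (k+1))

def cA : A := ⁅FreeGroup.of true, FreeGroup.of false⁆
def cB : B k :=
  (((List.finRange (k+1)).map fun i =>
    ⁅FreeGroup.of (true, i), FreeGroup.of ((false, i) : Bool × Fin (k+1))⁆).prod)⁻¹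

/-- The two factor groups, as a family over `Bool`. -/
abbrev Fac : Bool → Type
  | false => A
  | true => B k

instance facGroup : ∀ b, Group (Fac k b)
  | false => inferInstanceAs (Group A)
  | true => inferInstanceAs (Group (B k))

/-- The edge maps `ℤ → Fac k b`. -/
def phi : ∀ b, FreeGroup Unit →* Fac k b
  | false => FreeGroup.lift fun _ => cA
  | true => FreeGroup.lift fun _ => cB k

/-- every element of `FreeGroup Unit` is a power of the generator -/
lemma unit_pow (w : FreeGroup Unit) : ∃ n : ℤ, w = (FreeGroup.of ()) ^ n := by
  induction w using FreeGroup.induction_on with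
  | C1 => exact ⟨0, by simp⟩
  | of x => exact ⟨1, by rw [zpow_one]⟩
  | inv_of x _ => exact ⟨-1, by rw [zpow_neg, zpow_one]⟩
  | mul x y hx hy =>
      obtain ⟨n, rfl⟩ := hx
      obtain ⟨m, rfl⟩ := hy
      exact ⟨n + m, (zpow_add _ _ _).symm⟩

-- new material
def rhoA : A →* Equiv.Perm ℚ := FreeGroup.lift fun b => if b then pQ else mQ

def rhoB : B k →* Equiv.Perm ℚ :=
  FreeGroup.lift fun x => if x.2 = 0 then (if x.1 then pQ else mQ) else 1

lemma rhoA_cA : rhoA (cA) = Equiv.addRight (-1 : ℚ) := by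
  rw [cA, map_commutatorElement, ← comm_pm]
  simp [rhoA]

lemma rhoB_cB : rhoB k (cB k) = (Equiv.addRight (-1 : ℚ))⁻¹ := by
  rw [cB, map_inv, map_list_prod, List.map_map, List.finRange_succ, List.map_cons,
    List.map_map]
  have h0 : ((rhoB k) ∘ fun i : Fin (k+1) =>
      ⁅FreeGroup.of ((true, i) : Bool × Fin (k+1)), FreeGroup.of (false, i)⁆) 0
      = ⁅pQ, mQ⁆ := by
    simp [rhoB, map_commutatorElement]
  have h1 : ∀ i : Fin k, (((rhoB k) ∘ fun i : Fin (k+1) =>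
      ⁅FreeGroup.of ((true, i) : Bool × Fin (k+1)), FreeGroup.of (false, i)⁆) ∘ Fin.succ) i
      = 1 := by
    intro i
    simp [rhoB, map_commutatorElement, Fin.succ_ne_zero]
  rw [List.prod_cons, h0]
  have : (List.map (((rhoB k) ∘ fun i : Fin (k+1) =>
      ⁅FreeGroup.of ((true, i) : Bool × Fin (k+1)), FreeGroup.of (false, i)⁆) ∘ Fin.succ)
      (List.finRange k)).prod = 1 :=
    List.prod_eq_one (by intro x hx; simp only [List.mem_map] at hx; obtain ⟨i, _, rfl⟩ := hx; exact h1 i)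
  rw [this, mul_one, comm_pm]

lemma phi_inj : ∀ b, Injective (phi k b) := by
  intro b
  rw [injective_iff_map_eq_one]
  intro w hw
  obtain ⟨n, rfl⟩ := unit_pow w
  rw [map_zpow] at hw
  cases b with
  | false =>
      have : (rhoA ((phi k false) (FreeGroup.of ()))) ^ n = 1 := by
        rw [← map_zpow, hw, map_one]
      have hc : (phi k false) (FreeGroup.of ()) = cA := by simp [phi]
      rw [hc, rhoA_cA] at this
      rw [addRight_zpow_eq_one this, zpow_zero]
  | true =>
      have : (rhoB k ((phi k true) (FreeGroup.of ()))) ^ n = 1 := by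
        rw [← map_zpow, hw, map_one]
      have hc : (phi k true) (FreeGroup.of ()) = cB k := by simp [phi]
      rw [hc, rhoB_cB, ← zpow_neg_one, ← zpow_mul] at this
      have h0 := addRight_zpow_eq_one this
      have : n = 0 := by omega
      rw [this, zpow_zero]

-- new
lemma hom_comm_kills {M : Type*} [CommGroup M] (b : Bool) (f : Fac k b →* M) {v : Fac k b}
    (hv : v ∈ (phi k b).range) : f v = 1 := by
  obtain ⟨w, rfl⟩ := hv
  have key : f ((phi k b) (FreeGroup.of ())) = 1 := by
    cases b with
    | false =>
        have hc : (phi k false) (FreeGroup.of ()) = cA := by simp [phi]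
        rw [hc, cA, map_commutatorElement, commutatorElement_eq_one_iff_commute]
        exact mul_comm _ _
    | true =>
        have hc : (phi k true) (FreeGroup.of ()) = cB k := by simp [phi]
        rw [hc, cB, map_inv, inv_eq_one, map_list_prod, List.map_map]
        refine List.prod_eq_one ?_
        intro x hx
        simp only [List.mem_map] at hx
        obtain ⟨i, _, rfl⟩ := hx
        rw [comp_apply, map_commutatorElement, commutatorElement_eq_one_iff_commute]
        exact mul_comm _ _
  have hcomp : f.comp (phi k b) = 1 := by
    apply FreeGroup.ext_hom
    intro x
    cases x
    simpa using key
  calc f ((phi k b) w) = (f.comp (phi k b)) w := rfl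
    _ = 1 := by rw [hcomp]; rfl

def xg : ∀ b, Fac k b
  | false => FreeGroup.of true
  | true => FreeGroup.of (true, (0 : Fin (k+1)))

def eps : ∀ b, Fac k b →* Multiplicative ℤ
  | false => FreeGroup.lift fun s => if s then Multiplicative.ofAdd 1 else 1
  | true => FreeGroup.lift fun x => if x = (true, (0 : Fin (k+1))) then Multiplicative.ofAdd 1 else 1

lemma eps_xg : ∀ b, eps k b (xg k b) = Multiplicative.ofAdd 1 := by
  intro b; cases b <;> · rw [eps, xg]; erw [FreeGroup.lift_apply_of]

lemma conj_xg_notin (b : Bool) (c : Fac k b) : c * xg k b * c⁻¹ ∉ (phi k b).range := by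
  intro hmem
  have h := hom_comm_kills k b (eps k b) hmem
  rw [map_mul, map_mul, map_inv, mul_comm, inv_mul_cancel_left, eps_xg] at h
  have : (Multiplicative.ofAdd (1:ℤ)).toAdd = (1:Multiplicative ℤ).toAdd := by rw [h]
  simp at this

lemma xg_notin (b : Bool) : xg k b ∉ (phi k b).range := by
  have := conj_xg_notin k b 1
  simpa using this


end SGC

namespace SGC

open Monoid PushoutI

variable (k : ℕ)

abbrev P := Monoid.PushoutI (phi k)

def F : (Σ b, Fac k b) → P k := fun l => PushoutI.of (φ := phi k) l.1 l.2

lemma word_prod_eq (W : Monoid.CoprodI.Word (Fac k)) :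
    PushoutI.ofCoprodI (φ := phi k) W.prod = (W.toList.map (F k)).prod := by
  rw [Monoid.CoprodI.Word.prod, map_list_prod, List.map_map]
  refine congrArg List.prod (List.map_congr_left ?_)
  intro l _
  simp [F, PushoutI.ofCoprodI_of]

lemma nonempty_reduced_ne_one (M : List (Σ b, Fac k b))
    (h1 : ∀ l ∈ M, l.2 ∉ (phi k l.1).range)
    (h2 : M.IsChain fun a b => a.1 ≠ b.1) (h3 : M ≠ []) :
    (M.map (F k)).prod ≠ 1 := by
  intro hone
  have hW : ∀ l ∈ M, l.2 ≠ (1 : Fac k l.1) :=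
    fun l hl he => h1 l hl (he ▸ (phi k l.1).range.one_mem)
  set W : Monoid.CoprodI.Word (Fac k) := ⟨M, hW, h2⟩ with hWdef
  have hred : PushoutI.Reduced (phi k) W := fun l hl => h1 l hl
  have hmem : PushoutI.ofCoprodI (φ := phi k) W.prod ∈ (PushoutI.base (phi k)).range := by
    rw [word_prod_eq]
    show (M.map (F k)).prod ∈ _
    rw [hone]
    exact one_mem _
  have hempty := PushoutI.Reduced.eq_empty_of_mem_range (phi_inj k) hred hmem
  exact h3 (congrArg Monoid.CoprodI.Word.toList hempty)

end SGC

namespace SGC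
open Monoid PushoutI

variable (k : ℕ)

lemma conj_helper (j : Bool) (N : List (Σ b, Fac k b))
    (hN1 : ∀ l ∈ N, l.2 ∉ (phi k l.1).range)
    (hN2 : N.IsChain fun a b => a.1 ≠ b.1)
    (hN0 : N ≠ [])
    (hlast : ∀ l ∈ N.getLast?, l.1 ≠ j)
    (hhead : ∀ l ∈ N.head?, l.1 ≠ j)
    (x y : Fac k j) (hx : x ∉ (phi k j).range) (hy : y ∉ (phi k j).range)
    (hprod : (N.map (F k)).prod * PushoutI.of (φ := phi k) j x * ((N.map (F k)).prod)⁻¹ *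
      PushoutI.of (φ := phi k) j y = 1) : False := by
  classical
  set invN : List (Σ b, Fac k b) := (N.map fun l => ⟨l.1, l.2⁻¹⟩).reverse with hinvN
  set M : List (Σ b, Fac k b) := N ++ ⟨j, x⟩ :: (invN ++ [⟨j, y⟩]) with hM
  have hInvHead : invN.head? = (N.getLast?).map (fun l => (⟨l.1, l.2⁻¹⟩ : Σ b, Fac k b)) := by
    rw [hinvN, List.head?_reverse, List.getLast?_map]
  have hInvLast : invN.getLast? = (N.head?).map (fun l => (⟨l.1, l.2⁻¹⟩ : Σ b, Fac k b)) := by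
    rw [hinvN, List.getLast?_reverse, List.head?_map]
  have hmem : ∀ l ∈ M, l.2 ∉ (phi k l.1).range := by
    intro l hl
    rw [hM] at hl
    rcases List.mem_append.1 hl with h | h
    · exact hN1 l h
    · rcases List.mem_cons.1 h with rfl | h
      · exact hx
      · rcases List.mem_append.1 h with h | h
        · rw [hinvN] at h
          obtain ⟨l', hl', rfl⟩ := List.mem_map.1 (List.mem_reverse.1 h)
          exact fun hm => hN1 l' hl' ((Subgroup.inv_mem_iff _).1 hm)
        · rcases List.mem_singleton.1 h with rfl
          exact hy
  have hchainInv : invN.IsChain (fun a b => a.1 ≠ b.1) := by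
    rw [hinvN, List.isChain_reverse]
    refine (List.isChain_map _).2 (hN2.imp ?_)
    intro a b h
    exact fun hh => h hh.symm
  have hInvNe : invN ≠ [] := by
    simp only [hinvN, ne_eq, List.reverse_eq_nil_iff, List.map_eq_nil_iff]
    exact hN0
  have hchainM : M.IsChain (fun a b => a.1 ≠ b.1) := by
    rw [hM]
    refine List.isChain_append.2 ⟨hN2, ?_, ?_⟩
    · refine List.isChain_cons.2 ⟨?_, ?_⟩
      · intro l hl
        rw [List.head?_append_of_ne_nil _ hInvNe, hInvHead] at hl
        obtain ⟨l', hl', rfl⟩ := Option.map_eq_some_iff.1 (Option.mem_def.1 hl)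
        exact fun h => hlast l' (Option.mem_def.2 hl') h.symm
      · refine List.isChain_append.2 ⟨hchainInv, List.isChain_singleton _, ?_⟩
        intro a ha b hb
        rw [hInvLast] at ha
        obtain ⟨l', hl', rfl⟩ := Option.map_eq_some_iff.1 (Option.mem_def.1 ha)
        simp only [List.head?_cons, Option.mem_def, Option.some.injEq] at hb
        subst hb
        exact hhead l' (Option.mem_def.2 hl')
    · intro a ha b hb
      simp only [List.head?_cons, Option.mem_def, Option.some.injEq] at hb
      subst hb
      exact hlast a ha
  have hInvProd : (invN.map (F k)).prod = ((N.map (F k)).prod)⁻¹ := by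
    rw [List.prod_inv_reverse, hinvN, List.map_reverse]
    rw [List.map_map, List.map_map]
    refine congrArg List.prod (congrArg List.reverse (List.map_congr_left ?_))
    intro l _
    show F k ⟨l.1, l.2⁻¹⟩ = (F k l)⁻¹
    exact map_inv (PushoutI.of (φ := phi k) l.1) l.2
  have hMprod : (M.map (F k)).prod = 1 := by
    rw [hM, List.map_append, List.prod_append, List.map_cons, List.prod_cons,
      List.map_append, List.prod_append, List.map_singleton, List.prod_singleton, hInvProd]
    have : F k ⟨j, x⟩ = PushoutI.of (φ := phi k) j x := rfl
    rw [this]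
    have : F k ⟨j, y⟩ = PushoutI.of (φ := phi k) j y := rfl
    rw [this]
    rw [← hprod]
    group
  exact nonempty_reduced_ne_one k M hmem hchainM (by simp [hM]) hMprod

end SGC

namespace SGC
open Monoid PushoutI

variable (k : ℕ)

lemma set_inter {d : PushoutI.NormalWord.Transversal (phi k)} {b : Bool} {g : Fac k b}
    (hset : g ∈ d.set b) (hrange : g ∈ (phi k b).range) : g = 1 := by
  have hinj := (d.compl b).1
  have h12 := hinj (a₁ := ⟨⟨g, hrange⟩, ⟨1, d.one_mem b⟩⟩)
      (a₂ := ⟨⟨1, ((phi k b).range : Subgroup (Fac k b)).one_mem⟩, ⟨g, hset⟩⟩) (by simp)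
  exact (congrArg (fun p => (p.2 : Fac k b)) h12).symm

lemma center_aux (z : P k) (hz : ∀ p : P k, z * p = p * z) : z = 1 := by
  classical
  obtain ⟨d⟩ := PushoutI.NormalWord.transversal_nonempty (phi k) (phi_inj k)
  set w := PushoutI.NormalWord.equiv (φ := phi k) (d := d) z with hw
  have hzw : w.prod = z := PushoutI.NormalWord.equiv.symm_apply_apply z
  have hz0 : z = PushoutI.base (phi k) w.head * PushoutI.ofCoprodI w.toWord.prod := by
    rw [← hzw]; rfl
  set h0 := w.head with hh0
  set L := w.toWord.toList with hLdef
  have hLchain : L.IsChain fun a b => a.1 ≠ b.1 := w.toWord.chain_ne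
  have hred : ∀ l ∈ L, l.2 ∉ (phi k l.1).range := by
    intro l hl hmem
    have hne := w.toWord.ne_one l hl
    have hset : l.2 ∈ d.set l.1 := w.normalized l.1 l.2 (by rwa [Sigma.eta])
    exact hne (set_inter k hset hmem)
  by_cases hL : L = []
  · -- z is in the base group
    have hWprod : w.toWord.prod = 1 := by
      rw [Monoid.CoprodI.Word.prod, ← hLdef, hL]; rfl
    have hzb : z = PushoutI.base (phi k) h0 := by
      rw [hz0, hWprod, map_one, mul_one]
    obtain ⟨n, hn⟩ := unit_pow h0
    -- commute with the image of b₀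
    have hcomm := hz (PushoutI.of (φ := phi k) false (FreeGroup.of false))
    rw [hzb, ← PushoutI.of_apply_eq_base (φ := phi k) false h0, ← map_mul, ← map_mul] at hcomm
    have heq := PushoutI.of_injective (phi_inj k) false hcomm
    have heq2 := congrArg rhoA heq
    have hphiA : (phi k false) h0 = cA ^ n := by
      rw [hn, map_zpow, show (phi k false) (FreeGroup.of ()) = cA by simp [phi]]
    rw [map_mul, map_mul, hphiA, map_zpow, rhoA_cA] at heq2
    have hrhoAof : rhoA (FreeGroup.of false) = mQ := by
      simp [rhoA]
    rw [hrhoAof] at heq2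
    -- evaluate both sides at 0
    have heval := congrArg (fun (f : Equiv.Perm ℚ) => f 0) heq2
    simp only [Equiv.Perm.mul_apply] at heval
    rw [mQ_apply, addRight_zpow, addRight_zpow, mQ_apply] at heval
    have hn0 : n = 0 := by
      have : (n : ℚ) = 0 := by linarith
      exact_mod_cast this
    rw [hzb, hn, hn0, zpow_zero, map_one]
  · -- the word is nonempty : derive a contradiction
    exfalso
    obtain ⟨fst, hfst⟩ : ∃ l, L.head? = some l := ⟨L.head hL, List.head?_eq_head hL⟩
    set j := !fst.1 with hj
    have hfstj : fst.1 ≠ j := by rw [hj]; simp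
    set V := (L.map (F k)).prod with hV
    have hzV : z = PushoutI.base (phi k) h0 * V := by
      rw [hz0, word_prod_eq]
    have key : ∀ u : Fac k j,
        V * PushoutI.of (φ := phi k) j u * V⁻¹ *
          PushoutI.of (φ := phi k) j ((((phi k j) h0)⁻¹ * u * (phi k j) h0)⁻¹) = 1 := by
      intro u
      have h1 := hz (PushoutI.of (φ := phi k) j u)
      rw [hzV] at h1
      have h2 : V * PushoutI.of (φ := phi k) j u * V⁻¹ =
          (PushoutI.base (phi k) h0)⁻¹ * PushoutI.of (φ := phi k) j u *
            PushoutI.base (phi k) h0 := by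
        rw [mul_assoc] at h1
        -- h1 : base h0 * (V * of j u) = of j u * (base h0 * V)
        have h3 : V * PushoutI.of (φ := phi k) j u =
            (PushoutI.base (phi k) h0)⁻¹ * (PushoutI.of (φ := phi k) j u *
              (PushoutI.base (phi k) h0 * V)) := by
          rw [← h1, inv_mul_cancel_left]
        rw [h3]
        group
      rw [h2, ← PushoutI.of_apply_eq_base (φ := phi k) j h0, ← map_inv, ← map_mul, ← map_mul,
        ← map_mul]
      rw [← map_one (PushoutI.of (φ := phi k) j)]
      congr 1
      group
    obtain ⟨N, lst, hdec⟩ : ∃ N lst, L = N ++ [lst] :=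
      ⟨L.dropLast, L.getLast hL, (List.dropLast_append_getLast hL).symm⟩
    obtain ⟨bl, gl⟩ := lst
    have hlast? : L.getLast? = some ⟨bl, gl⟩ := by rw [hdec]; exact List.getLast?_concat
    have hheadL : ∀ l ∈ L.head?, l.1 ≠ j := by
      intro l hl
      have hlf : fst = l := Option.some.inj (hfst.symm.trans (Option.mem_def.1 hl))
      rw [← hlf]
      exact hfstj
    by_cases hbl : bl = j
    · -- last letter is in factor j : merge
      subst hbl
      have hN0 : N ≠ [] := by
        rintro rfl
        simp only [List.nil_append] at hdec
        rw [hdec] at hfst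
        simp only [List.head?_cons] at hfst
        have : fst = ⟨j, gl⟩ := (Option.some.inj hfst).symm
        rw [this] at hfstj
        exact hfstj rfl
      have hchain2 := hLchain
      rw [hdec] at hchain2
      have hcsplit := List.isChain_append.1 hchain2
      have hNlast : ∀ l ∈ N.getLast?, l.1 ≠ j := by
        intro l hl
        exact hcsplit.2.2 l hl ⟨j, gl⟩ rfl
      have hNhead : ∀ l ∈ N.head?, l.1 ≠ j := by
        intro l hl
        apply hheadL
        rw [hdec]
        exact List.mem_head?_append_of_mem_head? hl
      have hVdec : V = (N.map (F k)).prod * PushoutI.of (φ := phi k) j gl := by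
        rw [hV, hdec, List.map_append, List.prod_append, List.map_singleton,
          List.prod_singleton]
        rfl
      refine conj_helper k j N (fun l hl => hred l (by rw [hdec]; exact List.mem_append_left _ hl))
        hcsplit.1 hN0 hNlast hNhead
        (gl * xg k j * gl⁻¹)
        ((((phi k j) h0)⁻¹ * xg k j * (phi k j) h0)⁻¹)
        (conj_xg_notin k j gl)
        ?_ ?_
      · intro hmem
        apply xg_notin k j
        have h1 : (((phi k j) h0)⁻¹ * xg k j * (phi k j) h0) ∈ (phi k j).range :=
          (Subgroup.inv_mem_iff _).1 hmem
        have h2 : (phi k j) h0 ∈ (phi k j).range := ⟨h0, rfl⟩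
        have := Subgroup.mul_mem _ (Subgroup.mul_mem _ h2 h1) ((Subgroup.inv_mem_iff _).2 h2)
        convert this using 1
        group
      · have hprod := key (xg k j)
        rw [hVdec] at hprod
        rw [← hprod]
        simp only [map_mul, map_inv, mul_inv_rev, mul_assoc]
    · -- last letter is not in factor j
      refine conj_helper k j L hred hLchain hL
        (fun l hl => by
          have h12 : (⟨bl, gl⟩ : Σ b, Fac k b) = l :=
            Option.some.inj (hlast?.symm.trans (Option.mem_def.1 hl))
          rw [← h12]; exact hbl)
        hheadL
        (xg k j)
        ((((phi k j) h0)⁻¹ * xg k j * (phi k j) h0)⁻¹)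
        (xg_notin k j)
        ?_ ?_
      · intro hmem
        apply xg_notin k j
        have h1 : (((phi k j) h0)⁻¹ * xg k j * (phi k j) h0) ∈ (phi k j).range :=
          (Subgroup.inv_mem_iff _).1 hmem
        have h2 : (phi k j) h0 ∈ (phi k j).range := ⟨h0, rfl⟩
        have := Subgroup.mul_mem _ (Subgroup.mul_mem _ h2 h1) ((Subgroup.inv_mem_iff _).2 h2)
        convert this using 1
        group
      · exact key (xg k j)

end SGC

namespace SGC
open Monoid PushoutI

variable (k : ℕ)

abbrev S := PresentedGroup ({surfaceRelator (k+2)} : Set (FreeGroup (Fin (k+2) ⊕ Fin (k+2))))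

def sa (i : Fin (k+2)) : S k := PresentedGroup.of (Sum.inl i)
def sb (i : Fin (k+2)) : S k := PresentedGroup.of (Sum.inr i)

lemma relator_expand {K : Type*} [Group K] (f : FreeGroup (Fin (k+2) ⊕ Fin (k+2)) →* K) :
    f (surfaceRelator (k+2)) =
      ⁅f (FreeGroup.of (Sum.inl 0)), f (FreeGroup.of (Sum.inr 0))⁆ *
        ((List.finRange (k+1)).map fun i =>
          ⁅f (FreeGroup.of (Sum.inl i.succ)), f (FreeGroup.of (Sum.inr i.succ))⁆).prod := by
  rw [surfaceRelator, map_list_prod, List.map_map, List.finRange_succ, List.map_cons,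
    List.prod_cons, List.map_map]
  congr 1
  · exact map_commutatorElement _ _ _
  · refine congrArg List.prod (List.map_congr_left ?_)
    intro i _
    exact map_commutatorElement _ _ _

def fgen : Fin (k+2) ⊕ Fin (k+2) → P k
  | .inl i => Fin.cases (motive := fun _ => P k) (PushoutI.of (φ := phi k) false (FreeGroup.of true))
      (fun i' => PushoutI.of (φ := phi k) true (FreeGroup.of (true, i'))) i
  | .inr i => Fin.cases (motive := fun _ => P k) (PushoutI.of (φ := phi k) false (FreeGroup.of false))
      (fun i' => PushoutI.of (φ := phi k) true (FreeGroup.of (false, i'))) i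

lemma fgen_inl_zero : fgen k (Sum.inl 0) = PushoutI.of (φ := phi k) false (FreeGroup.of true) := rfl
lemma fgen_inr_zero : fgen k (Sum.inr 0) = PushoutI.of (φ := phi k) false (FreeGroup.of false) := rfl
lemma fgen_inl_succ (i : Fin (k+1)) :
    fgen k (Sum.inl i.succ) = PushoutI.of (φ := phi k) true (FreeGroup.of (true, i)) := by
  show Fin.cases (motive := fun _ => P k) _ _ i.succ = _
  rw [Fin.cases_succ]
lemma fgen_inr_succ (i : Fin (k+1)) :
    fgen k (Sum.inr i.succ) = PushoutI.of (φ := phi k) true (FreeGroup.of (false, i)) := by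
  show Fin.cases (motive := fun _ => P k) _ _ i.succ = _
  rw [Fin.cases_succ]

lemma fgen_relator : FreeGroup.lift (fgen k) (surfaceRelator (k+2)) = 1 := by
  rw [relator_expand]
  simp only [FreeGroup.lift_apply_of]
  rw [fgen_inl_zero, fgen_inr_zero]
  have h1 : ⁅PushoutI.of (φ := phi k) false (FreeGroup.of true),
      PushoutI.of (φ := phi k) false (FreeGroup.of false)⁆
      = PushoutI.of (φ := phi k) false cA := (map_commutatorElement _ _ _).symm
  have h2 : ((List.finRange (k+1)).map fun i =>
      ⁅fgen k (Sum.inl i.succ), fgen k (Sum.inr i.succ)⁆).prod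
      = PushoutI.of (φ := phi k) true ((cB k)⁻¹) := by
    rw [cB, inv_inv, map_list_prod, List.map_map]
    refine congrArg List.prod (List.map_congr_left ?_)
    intro i _
    rw [fgen_inl_succ, fgen_inr_succ]
    exact (map_commutatorElement _ _ _).symm
  rw [h1, h2]
  rw [show cA = phi k false (FreeGroup.of ()) from by simp [phi],
    show (cB k)⁻¹ = (phi k true (FreeGroup.of ()))⁻¹ from by simp [phi],
    map_inv, PushoutI.of_apply_eq_base, PushoutI.of_apply_eq_base]
  exact mul_inv_cancel _

def Phi : S k →* P k :=
  PresentedGroup.toGroup (f := fgen k) (by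
    rintro r hr
    rw [Set.mem_singleton_iff] at hr
    subst hr
    exact fgen_relator k)

def famB : ∀ b, Fac k b →* S k
  | false => FreeGroup.lift fun t => if t then sa k 0 else sb k 0
  | true => FreeGroup.lift fun x => if x.1 then sa k x.2.succ else sb k x.2.succ

def kH : FreeGroup Unit →* S k := FreeGroup.lift fun _ => ⁅sa k 0, sb k 0⁆

lemma srel : ⁅sa k 0, sb k 0⁆ *
    ((List.finRange (k+1)).map fun i => ⁅sa k i.succ, sb k i.succ⁆).prod = 1 := by
  have h1 : PresentedGroup.mk {surfaceRelator (k+2)} (surfaceRelator (k+2)) = 1 := by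
    apply (QuotientGroup.eq_one_iff _).2
    exact Subgroup.subset_normalClosure (Set.mem_singleton _)
  rw [relator_expand k (PresentedGroup.mk _)] at h1
  exact h1

lemma comp_eq : ∀ b, (famB k b).comp (phi k b) = kH k := by
  intro b
  apply FreeGroup.ext_hom
  intro x
  cases x
  have hk : kH k (FreeGroup.of ()) = ⁅sa k 0, sb k 0⁆ := by
    rw [kH]; erw [FreeGroup.lift_apply_of]
  rw [MonoidHom.comp_apply, hk]
  cases b with
  | false =>
      rw [show phi k false (FreeGroup.of ()) = cA from by simp [phi], cA,
        map_commutatorElement]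
      rw [famB]
      erw [FreeGroup.lift_apply_of, FreeGroup.lift_apply_of]
      simp
  | true =>
      rw [show phi k true (FreeGroup.of ()) = cB k from by simp [phi], cB, map_inv]
      have hQ : famB k true (((List.finRange (k+1)).map fun i =>
          ⁅FreeGroup.of ((true, i) : Bool × Fin (k+1)), FreeGroup.of (false, i)⁆).prod)
          = ((List.finRange (k+1)).map fun i => ⁅sa k i.succ, sb k i.succ⁆).prod := by
        rw [map_list_prod, List.map_map]
        refine congrArg List.prod (List.map_congr_left ?_)
        intro i _
        simp only [Function.comp_apply]
        rw [map_commutatorElement, famB]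
        erw [FreeGroup.lift_apply_of, FreeGroup.lift_apply_of]
        simp
      rw [hQ]
      exact inv_eq_of_mul_eq_one_left (srel k)

def Psi : P k →* S k := PushoutI.lift (famB k) (kH k) (comp_eq k)

lemma Phi_of (x : Fin (k+2) ⊕ Fin (k+2)) : Phi k (PresentedGroup.of x) = fgen k x :=
  PresentedGroup.toGroup.of _

lemma Phi_Psi (p : P k) : Phi k (Psi k p) = p := by
  have hcomp : (Phi k).comp (Psi k) = MonoidHom.id (P k) := by
    apply PushoutI.hom_ext_nonempty
    intro b
    cases b with
    | false =>
        apply FreeGroup.ext_hom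
        intro t
        show Phi k (Psi k (PushoutI.of (φ := phi k) false (FreeGroup.of t))) =
          PushoutI.of (φ := phi k) false (FreeGroup.of t)
        rw [Psi, PushoutI.lift_of]
        cases t with
        | true =>
            rw [show famB k false (FreeGroup.of true) = sa k 0 from by
              rw [famB]; erw [FreeGroup.lift_apply_of]; simp]
            rw [sa, Phi_of, fgen_inl_zero]
        | false =>
            rw [show famB k false (FreeGroup.of false) = sb k 0 from by
              rw [famB]; erw [FreeGroup.lift_apply_of]; simp]
            rw [sb, Phi_of, fgen_inr_zero]
    | true =>
        apply FreeGroup.ext_hom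
        intro x
        obtain ⟨t, i⟩ := x
        show Phi k (Psi k (PushoutI.of (φ := phi k) true (FreeGroup.of (t, i)))) =
          PushoutI.of (φ := phi k) true (FreeGroup.of (t, i))
        rw [Psi, PushoutI.lift_of]
        cases t with
        | true =>
            rw [show famB k true (FreeGroup.of (true, i)) = sa k i.succ from by
              rw [famB]; erw [FreeGroup.lift_apply_of]; simp]
            rw [sa, Phi_of, fgen_inl_succ]
        | false =>
            rw [show famB k true (FreeGroup.of (false, i)) = sb k i.succ from by
              rw [famB]; erw [FreeGroup.lift_apply_of]; simp]
            rw [sb, Phi_of, fgen_inr_succ]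
  calc Phi k (Psi k p) = ((Phi k).comp (Psi k)) p := rfl
    _ = p := by rw [hcomp]; rfl

lemma Psi_Phi (s : S k) : Psi k (Phi k s) = s := by
  have hcomp : (Psi k).comp (Phi k) = MonoidHom.id (S k) := by
    apply PresentedGroup.ext
    intro x
    show Psi k (Phi k (PresentedGroup.of x)) = PresentedGroup.of x
    rw [Phi_of]
    rcases x with i | i
    · induction i using Fin.cases with
      | zero =>
          rw [fgen_inl_zero, Psi, PushoutI.lift_of, famB]
          erw [FreeGroup.lift_apply_of]
          simp [sa]
      | succ i' =>
          rw [fgen_inl_succ, Psi, PushoutI.lift_of, famB]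
          erw [FreeGroup.lift_apply_of]
          simp [sa]
    · induction i using Fin.cases with
      | zero =>
          rw [fgen_inr_zero, Psi, PushoutI.lift_of, famB]
          erw [FreeGroup.lift_apply_of]
          simp [sb]
      | succ i' =>
          rw [fgen_inr_succ, Psi, PushoutI.lift_of, famB]
          erw [FreeGroup.lift_apply_of]
          simp [sb]
  calc Psi k (Phi k s) = ((Psi k).comp (Phi k)) s := rfl
    _ = s := by rw [hcomp]; rfl

lemma S_center (z : S k) (hz : ∀ p : S k, z * p = p * z) : z = 1 := by
  have hPz : ∀ p : P k, Phi k z * p = p * Phi k z := by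
    intro p
    conv_lhs => rw [← Phi_Psi k p]
    conv_rhs => rw [← Phi_Psi k p]
    rw [← map_mul, ← map_mul, hz (Psi k p)]
  have h1 : Phi k z = 1 := center_aux k _ hPz
  have h2 := Psi_Phi k z
  rw [h1, map_one] at h2
  exact h2.symm

end SGC


/-- For `g ≥ 2`, the center of the genus-`g` surface group is trivial. -/
theorem surfaceGroup_center_eq_bot (g : ℕ) (hg : 2 ≤ g) :
    Subgroup.center (SurfaceGroup g) = ⊥ := by
  obtain ⟨k, rfl⟩ : ∃ k, g = k + 2 := ⟨g - 2, by omega⟩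
  show Subgroup.center (SGC.S k) = ⊥
  rw [eq_bot_iff]
  intro z hzc
  have hone : z = 1 := SGC.S_center k z (fun p => (Subgroup.mem_center_iff.1 hzc p).symm)
  exact hone ▸ Subgroup.one_mem ⊥
end

section
/- A map on a wedge of two circles extends over the torus if and only if the loops commute in the fundamental group: let X be a topological space, x : X, and let a, b : C(Circle, X) be continuous maps with a 1 = x = b 1. Then there exists a continuous map F : C(Circle × Circle, X) with F(z, 1) = a z for all z and F(1, w) = b w for all w, if and only if the homotopy classes [a] and [b] of the corresponding based loops commute in the fundamental group π₁(X, x). -/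
set_option linter.unusedSectionVars false

attribute [local instance] Path.Homotopic.setoid

/-- The based loop `t ↦ a (exp (2 π i t))` at `x` associated to a free loop
`a : C(Circle, X)` with `a 1 = x`. -/
noncomputable def basedLoopOf {X : Type*} [TopologicalSpace X] {x : X}
    (a : C(Circle, X)) (ha : a 1 = x) : Path x x where
  toFun t := a (Circle.exp (2 * Real.pi * t))
  continuous_toFun := by fun_prop
  source' := by simp [ha]
  target' := by simp [ha]

/-- The class in the fundamental group `π₁(X, x)` of the based loop associated to a free
loop `a : C(Circle, X)` with `a 1 = x`. -/
noncomputable def loopClass {X : Type*} [TopologicalSpace X] {x : X}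
    (a : C(Circle, X)) (ha : a 1 = x) : FundamentalGroup X x :=
  FundamentalGroup.fromPath (X := TopCat.of X) ⟦basedLoopOf a ha⟧

namespace TorusExtAux

open unitInterval Set CategoryTheory

noncomputable section

variable {X : Type*} [TopologicalSpace X] {x : X}

/-! ### Group-level commutativity vs quotient-level homotopy -/

lemma fromPath_mul (p q : Path x x) :
    (FundamentalGroup.fromPath (X := TopCat.of X) ⟦p⟧ *
        FundamentalGroup.fromPath (X := TopCat.of X) ⟦q⟧) =
      FundamentalGroup.fromPath (X := TopCat.of X) ⟦q.trans p⟧ := by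
  show (⟦q⟧ ≫ ⟦p⟧ : FundamentalGroupoid.mk x ⟶ FundamentalGroupoid.mk x) = ⟦q.trans p⟧
  rfl

lemma loopClass_comm_iff (a b : C(Circle, X)) (ha : a 1 = x) (hb : b 1 = x) :
    (loopClass a ha * loopClass b hb = loopClass b hb * loopClass a ha) ↔
      (⟦(basedLoopOf a ha).trans (basedLoopOf b hb)⟧ : Path.Homotopic.Quotient x x) =
        ⟦(basedLoopOf b hb).trans (basedLoopOf a ha)⟧ := by
  unfold loopClass
  rw [fromPath_mul, fromPath_mul]
  constructor
  · intro h
    exact h.symm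
  · intro h
    exact congrArg _ h.symm

/-! ### The circle loop -/

def circLoop : Path (1 : Circle) 1 where
  toFun t := Circle.exp (2 * Real.pi * t)
  continuous_toFun := by fun_prop
  source' := by simp
  target' := by simp

/-! ### Forward direction -/

lemma homotopic_of_extension (a b : C(Circle, X)) (ha : a 1 = x) (hb : b 1 = x)
    (F : C(Circle × Circle, X)) (hFa : ∀ z : Circle, F (z, 1) = a z)
    (hFb : ∀ w : Circle, F (1, w) = b w) :
    (⟦(basedLoopOf a ha).trans (basedLoopOf b hb)⟧ : Path.Homotopic.Quotient x x) =
      ⟦(basedLoopOf b hb).trans (basedLoopOf a ha)⟧ := by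
  set α := basedLoopOf a ha with hα
  set β := basedLoopOf b hb with hβ
  set L₁ : Path ((1,1) : Circle × Circle) (1,1) := circLoop.prod (Path.refl 1) with hL₁
  set L₂ : Path ((1,1) : Circle × Circle) (1,1) := (Path.refl 1).prod circLoop with hL₂
  have h12 : ∀ sg : I, F ((L₁.trans L₂) sg) = (α.trans β) sg := by
    intro sg
    rw [Path.trans_apply, Path.trans_apply]
    split_ifs with h
    · show F (circLoop _, 1) = α _
      rw [hFa]; rfl
    · show F (1, circLoop _) = β _
      rw [hFb]; rfl
  have h21 : ∀ sg : I, F ((L₂.trans L₁) sg) = (β.trans α) sg := by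
    intro sg
    rw [Path.trans_apply, Path.trans_apply]
    split_ifs with h
    · show F (1, circLoop _) = β _
      rw [hFb]; rfl
    · show F (circLoop _, 1) = α _
      rw [hFa]; rfl
  have e1 : L₁.trans L₂ = (circLoop.trans (Path.refl 1)).prod ((Path.refl 1).trans circLoop) :=
    Path.trans_prod_eq_prod_trans _ _ _ _
  have e2 : L₂.trans L₁ = ((Path.refl 1).trans circLoop).prod (circLoop.trans (Path.refl 1)) :=
    Path.trans_prod_eq_prod_trans _ _ _ _
  have hp : Path.Homotopy (circLoop.trans (Path.refl 1)) ((Path.refl 1).trans circLoop) :=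
    (Path.Homotopy.transRefl circLoop).trans (Path.Homotopy.reflTrans circLoop).symm
  have hq : Path.Homotopy ((Path.refl 1).trans circLoop) (circLoop.trans (Path.refl 1)) :=
    (Path.Homotopy.reflTrans circLoop).trans (Path.Homotopy.transRefl circLoop).symm
  have J : Path.Homotopy (L₁.trans L₂) (L₂.trans L₁) :=
    (Path.Homotopic.prodHomotopy hp hq).cast e1.symm e2.symm
  refine Quotient.sound ⟨{
    toContinuousMap := F.comp J.toContinuousMap
    map_zero_left := fun sg => by
      show F (J (0, sg)) = _
      rw [J.apply_zero]; exact h12 sg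
    map_one_left := fun sg => by
      show F (J (1, sg)) = _
      rw [J.apply_one]; exact h21 sg
    prop' := fun τ sg hsg => by
      show F (J (τ, sg)) = _
      rw [J.eq_fst τ hsg]; exact h12 sg }⟩

/-! ### Path evaluation helpers -/

lemma trans_eval_left {x y z : X} (p : Path x y) (q : Path y z) (u v : I)
    (h : 2 * (u : ℝ) = v) (hu : (u : ℝ) ≤ 1/2) : (p.trans q) u = p v := by
  rw [Path.trans_apply, dif_pos hu]
  congr 1
  exact Subtype.ext (by exact h)

lemma trans_eval_right {x y z : X} (p : Path x y) (q : Path y z) (u v : I)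
    (h : 2 * (u : ℝ) - 1 = v) (hu : ¬ (u : ℝ) ≤ 1/2) : (p.trans q) u = q v := by
  rw [Path.trans_apply, dif_neg hu]
  congr 1
  exact Subtype.ext (by exact h)

lemma symm_eval {x y : X} (p : Path x y) (u v : I) (h : 1 - (u : ℝ) = v) :
    p.symm u = p v := by
  rw [Path.symm_apply]
  simp only [Function.comp_apply]
  congr 1
  exact Subtype.ext (by rw [coe_symm_eq]; exact h)

/-! ### Evaluating the commutator-like loop `Γ = (α.trans β).trans ((β.trans α).symm)` -/

lemma evB (α β : Path x x) (s r : I) (hr : (r : ℝ) = s / 4) :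
    ((α.trans β).trans ((β.trans α).symm)) r = α s := by
  have hs0 : (0:ℝ) ≤ s := s.2.1
  have hs1 : (s:ℝ) ≤ 1 := s.2.2
  rw [trans_eval_left _ _ r ⟨(s:ℝ)/2, ⟨by linarith, by linarith⟩⟩ (by rw [hr]; ring)
      (by rw [hr]; linarith)]
  rw [trans_eval_left α β _ s (by show 2 * ((s:ℝ)/2) = s; ring) (by show (s:ℝ)/2 ≤ 1/2; linarith)]

lemma evR (α β : Path x x) (t r : I) (hr : (r : ℝ) = (1 + t) / 4) :
    ((α.trans β).trans ((β.trans α).symm)) r = β t := by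
  have hs0 : (0:ℝ) ≤ t := t.2.1
  have hs1 : (t:ℝ) ≤ 1 := t.2.2
  rw [trans_eval_left _ _ r ⟨(1 + t)/2, ⟨by linarith, by linarith⟩⟩ (by rw [hr]; ring)
      (by rw [hr]; linarith)]
  rcases eq_or_lt_of_le hs0 with h0 | h0
  · rw [trans_eval_left α β _ 1 (by show 2 * ((1 + (t:ℝ))/2) = ((1:I):ℝ); rw [← h0]; norm_num)
      (by show (1 + (t:ℝ))/2 ≤ 1/2; rw [← h0]; norm_num)]
    rw [Path.target, show t = 0 from Subtype.ext h0.symm, Path.source]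
  · rw [trans_eval_right α β _ t (by show 2 * ((1 + (t:ℝ))/2) - 1 = t; ring)
      (by show ¬ (1 + (t:ℝ))/2 ≤ 1/2; push_neg; linarith)]

lemma evT (α β : Path x x) (s r : I) (hr : (r : ℝ) = (3 - s) / 4) :
    ((α.trans β).trans ((β.trans α).symm)) r = α s := by
  have hs0 : (0:ℝ) ≤ s := s.2.1
  have hs1 : (s:ℝ) ≤ 1 := s.2.2
  rcases eq_or_lt_of_le hs1 with h1 | h1
  · rw [trans_eval_left _ _ r 1 (by rw [hr, h1]; norm_num) (by rw [hr, h1]; norm_num)]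
    rw [Path.target, show s = 1 from Subtype.ext h1, Path.target]
  · rw [trans_eval_right _ _ r ⟨(1 - s)/2, ⟨by linarith, by linarith⟩⟩ (by rw [hr]; ring)
      (by rw [hr]; push_neg; linarith)]
    rw [symm_eval _ _ ⟨(1 + s)/2, ⟨by linarith, by linarith⟩⟩
      (by show (1:ℝ) - (1 - (s:ℝ))/2 = (1 + s)/2; ring)]
    rcases eq_or_lt_of_le hs0 with h0 | h0
    · rw [trans_eval_left β α _ 1 (by show 2 * ((1 + (s:ℝ))/2) = ((1:I):ℝ); rw [← h0]; norm_num)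
        (by show (1 + (s:ℝ))/2 ≤ 1/2; rw [← h0]; norm_num)]
      rw [Path.target, show s = 0 from Subtype.ext h0.symm, Path.source]
    · rw [trans_eval_right β α _ s (by show 2 * ((1 + (s:ℝ))/2) - 1 = s; ring)
        (by show ¬ (1 + (s:ℝ))/2 ≤ 1/2; push_neg; linarith)]

lemma evL (α β : Path x x) (t r : I) (hr : (r : ℝ) = (4 - t) / 4) :
    ((α.trans β).trans ((β.trans α).symm)) r = β t := by
  have hs0 : (0:ℝ) ≤ t := t.2.1
  have hs1 : (t:ℝ) ≤ 1 := t.2.2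
  rw [trans_eval_right _ _ r ⟨(2 - t)/2, ⟨by linarith, by linarith⟩⟩ (by rw [hr]; ring)
      (by rw [hr]; push_neg; linarith)]
  rw [symm_eval _ _ ⟨(t:ℝ)/2, ⟨by linarith, by linarith⟩⟩
    (by show (1:ℝ) - (2 - (t:ℝ))/2 = t/2; ring)]
  rw [trans_eval_left β α _ t (by show 2 * ((t:ℝ)/2) = t; ring) (by show (t:ℝ)/2 ≤ 1/2; linarith)]

/-! ### The square-filling map -/

def clampI (r : ℝ) : I := Set.projIcc 0 1 zero_le_one r

lemma clampI_of_mem {r : ℝ} (h0 : 0 ≤ r) (h1 : r ≤ 1) : clampI r = ⟨r, h0, h1⟩ :=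
  Set.projIcc_of_mem _ ⟨h0, h1⟩

lemma clampI_eq_one {r : ℝ} (h : 1 ≤ r) : clampI r = 1 := by
  apply Subtype.ext
  simp [clampI, Set.coe_projIcc, min_eq_left h]

lemma clampI_eq_zero {r : ℝ} (h : r ≤ 0) : clampI r = 0 := by
  apply Subtype.ext
  simp [clampI, Set.coe_projIcc, min_eq_right (h.trans zero_le_one), max_eq_left h]

lemma continuous_clampI : Continuous clampI := by unfold clampI; exact continuous_projIcc

def rhoF (p : I × I) : ℝ := 2 * max |(p.1 : ℝ) - 1/2| |(p.2 : ℝ) - 1/2|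
def dF (p : I × I) : ℝ := max (rhoF p) (1/2)
def tauF (p : I × I) : ℝ := 2 - 2 * rhoF p
def sB (p : I × I) : ℝ := ((p.1 : ℝ) - p.2) / (4 * dF p)
def sL (p : I × I) : ℝ := 3/4 + |1 - (p.1 : ℝ) - p.2| / (4 * dF p)
def sR (p : I × I) : ℝ := 1/4 + |(p.1 : ℝ) + p.2 - 1| / (4 * dF p)
def sT (p : I × I) : ℝ := 1/2 + ((p.2 : ℝ) - p.1) / (4 * dF p)

def sqFill (W : C(I × I, X)) (p : I × I) : X :=
  if (p.1 : ℝ) + p.2 ≤ 1 then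
    (if (p.2 : ℝ) ≤ p.1 then W (clampI (tauF p), clampI (sB p))
      else W (clampI (tauF p), clampI (sL p)))
  else
    (if (p.2 : ℝ) ≤ p.1 then W (clampI (tauF p), clampI (sR p))
      else W (clampI (tauF p), clampI (sT p)))

lemma abs_half (u : I) : |(u : ℝ) - 1/2| ≤ 1/2 :=
  abs_le.2 ⟨by linarith [u.2.1], by linarith [u.2.2]⟩

lemma half_le_dF (p : I × I) : (1/2 : ℝ) ≤ dF p := le_max_right _ _

lemma fourd_ne (p : I × I) : (4 * dF p) ≠ 0 := by have := half_le_dF p; positivity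

lemma tau_one_of {p : I × I} (h : rhoF p ≤ 1/2) : (1:ℝ) ≤ tauF p := by
  unfold tauF; linarith

lemma rho_of_fst {s t : I} (h : |(s : ℝ) - 1/2| = 1/2) : rhoF (s, t) = 1 := by
  unfold rhoF
  rw [show |((s,t).1 : ℝ) - 1/2| = |(s:ℝ) - 1/2| from rfl, h, max_eq_left (abs_half t)]
  norm_num

lemma rho_of_snd {s t : I} (h : |(t : ℝ) - 1/2| = 1/2) : rhoF (s, t) = 1 := by
  unfold rhoF
  rw [show |((s,t).2 : ℝ) - 1/2| = |(t:ℝ) - 1/2| from rfl, h, max_eq_right (abs_half s)]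
  norm_num

section Wlemmas

variable {W : C(I × I, X)}

lemma W_tau_one (hW1 : ∀ sg : I, W (1, sg) = x) {τr : ℝ} (h : 1 ≤ τr) (sr : ℝ) :
    W (clampI τr, clampI sr) = x := by rw [clampI_eq_one h]; exact hW1 _

lemma W_sig_zero (hWs0 : ∀ τ : I, W (τ, 0) = x) {sr : ℝ} (h : sr ≤ 0) (τr : ℝ) :
    W (clampI τr, clampI sr) = x := by rw [clampI_eq_zero h]; exact hWs0 _

lemma W_sig_one (hWs1 : ∀ τ : I, W (τ, 1) = x) {sr : ℝ} (h : 1 ≤ sr) (τr : ℝ) :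
    W (clampI τr, clampI sr) = x := by rw [clampI_eq_one h]; exact hWs1 _

variable (hW1 : ∀ sg : I, W (1, sg) = x) (hWs0 : ∀ τ : I, W (τ, 0) = x)
  (hWs1 : ∀ τ : I, W (τ, 1) = x)

include hW1 hWs0 hWs1

lemma diag_BL (p : I × I) (ht : ((p.2 : ℝ)) = p.1) :
    W (clampI (tauF p), clampI (sB p)) = W (clampI (tauF p), clampI (sL p)) := by
  rcases le_or_gt (rhoF p) (1/2) with h | h
  · rw [W_tau_one hW1 (tau_one_of h), W_tau_one hW1 (tau_one_of h)]
  · have hd : dF p = rhoF p := max_eq_left h.le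
    have hB : sB p ≤ 0 := le_of_eq (by unfold sB; rw [ht]; simp)
    have hρ : |1 - (p.1 : ℝ) - p.2| = rhoF p := by
      unfold rhoF
      rw [ht, max_self]
      rw [show (1 - (p.1 : ℝ) - p.1) = -(2 * ((p.1:ℝ) - 1/2)) by ring, abs_neg, abs_mul]
      simp [abs_of_nonneg, mul_comm]
    have hL : (1:ℝ) ≤ sL p := by
      unfold sL
      rw [hρ, hd]
      have : rhoF p / (4 * rhoF p) = 1/4 := by
        rw [mul_comm, div_mul_eq_div_div, div_self (by linarith)]
      rw [this]; norm_num
    rw [W_sig_zero hWs0 hB, W_sig_one hWs1 hL]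

lemma diag_RT (p : I × I) (ht : ((p.2 : ℝ)) = p.1) :
    W (clampI (tauF p), clampI (sR p)) = W (clampI (tauF p), clampI (sT p)) := by
  rcases le_or_gt (rhoF p) (1/2) with h | h
  · rw [W_tau_one hW1 (tau_one_of h), W_tau_one hW1 (tau_one_of h)]
  · have hd : dF p = rhoF p := max_eq_left h.le
    have hρ : |(p.1 : ℝ) + p.2 - 1| = rhoF p := by
      unfold rhoF
      rw [ht, max_self]
      rw [show ((p.1 : ℝ) + p.1 - 1) = 2 * ((p.1:ℝ) - 1/2) by ring, abs_mul]
      simp [mul_comm]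
    have : sR p = sT p := by
      unfold sR sT
      rw [hρ, hd, ht]
      have : rhoF p / (4 * rhoF p) = 1/4 := by
        rw [mul_comm, div_mul_eq_div_div, div_self (by linarith)]
      rw [this]; ring
    rw [this]

lemma anti_BR (p : I × I) (hst : (p.1 : ℝ) + p.2 = 1) (hts : (p.2 : ℝ) ≤ p.1) :
    W (clampI (tauF p), clampI (sB p)) = W (clampI (tauF p), clampI (sR p)) := by
  rcases le_or_gt (rhoF p) (1/2) with h | h
  · rw [W_tau_one hW1 (tau_one_of h), W_tau_one hW1 (tau_one_of h)]
  · have hd : dF p = rhoF p := max_eq_left h.le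
    have hs : (1/2 : ℝ) ≤ p.1 := by linarith
    have hρ : rhoF p = (p.1 : ℝ) - p.2 := by
      unfold rhoF
      rw [show |(p.2 : ℝ) - 1/2| = |(p.1 : ℝ) - 1/2| by
        rw [show ((p.2 : ℝ) - 1/2) = -(((p.1 : ℝ)) - 1/2) by linarith, abs_neg]]
      rw [max_self, abs_of_nonneg (by linarith)]
      linarith
    have h0 : |(p.1 : ℝ) + p.2 - 1| = 0 := by rw [hst]; simp
    have : sB p = sR p := by
      unfold sB sR
      rw [h0, hd, ← hρ]
      have : rhoF p / (4 * rhoF p) = 1/4 := by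
        rw [mul_comm, div_mul_eq_div_div, div_self (by linarith)]
      rw [this]; norm_num
    rw [this]

lemma anti_LT (p : I × I) (hst : (p.1 : ℝ) + p.2 = 1) (hts : ¬ (p.2 : ℝ) ≤ p.1) :
    W (clampI (tauF p), clampI (sL p)) = W (clampI (tauF p), clampI (sT p)) := by
  push_neg at hts
  rcases le_or_gt (rhoF p) (1/2) with h | h
  · rw [W_tau_one hW1 (tau_one_of h), W_tau_one hW1 (tau_one_of h)]
  · have hd : dF p = rhoF p := max_eq_left h.le
    have hs : (p.1 : ℝ) ≤ 1/2 := by linarith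
    have hρ : rhoF p = (p.2 : ℝ) - p.1 := by
      unfold rhoF
      rw [show |(p.2 : ℝ) - 1/2| = |(p.1 : ℝ) - 1/2| by
        rw [show ((p.2 : ℝ) - 1/2) = -(((p.1 : ℝ)) - 1/2) by linarith, abs_neg]]
      rw [max_self, abs_of_nonpos (by linarith)]
      linarith
    have h0 : |1 - (p.1 : ℝ) - p.2| = 0 := by rw [show (1 - (p.1:ℝ) - p.2) = 0 by linarith]; simp
    have : sL p = sT p := by
      unfold sL sT
      rw [h0, hd, ← hρ]
      have : rhoF p / (4 * rhoF p) = 1/4 := by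
        rw [mul_comm, div_mul_eq_div_div, div_self (by linarith)]
      rw [this]; norm_num
    rw [this]

lemma sqFill_continuous : Continuous (sqFill W) := by
  have hc1 : Continuous fun p : I × I => (p.1 : ℝ) := by fun_prop
  have hc2 : Continuous fun p : I × I => (p.2 : ℝ) := by fun_prop
  have hrho : Continuous (rhoF) := by
    apply Continuous.mul continuous_const
    exact ((hc1.sub continuous_const).abs.max ((hc2.sub continuous_const).abs))
  have hd : Continuous (dF) := hrho.max continuous_const
  have htau : Continuous (tauF) := by
    apply Continuous.sub continuous_const
    exact continuous_const.mul hrho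
  have hsB : Continuous (sB) := (hc1.sub hc2).div (continuous_const.mul hd) fourd_ne
  have hsL : Continuous (sL) := by
    apply Continuous.add continuous_const
    exact ((continuous_const.sub hc1).sub hc2).abs.div (continuous_const.mul hd) fourd_ne
  have hsR : Continuous (sR) := by
    apply Continuous.add continuous_const
    exact ((hc1.add hc2).sub continuous_const).abs.div (continuous_const.mul hd) fourd_ne
  have hsT : Continuous (sT) := by
    apply Continuous.add continuous_const
    exact (hc2.sub hc1).div (continuous_const.mul hd) fourd_ne
  have wB : Continuous fun p => W (clampI (tauF p), clampI (sB p)) :=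
    W.continuous.comp (((continuous_clampI.comp htau).prodMk (continuous_clampI.comp hsB)))
  have wL : Continuous fun p => W (clampI (tauF p), clampI (sL p)) :=
    W.continuous.comp (((continuous_clampI.comp htau).prodMk (continuous_clampI.comp hsL)))
  have wR : Continuous fun p => W (clampI (tauF p), clampI (sR p)) :=
    W.continuous.comp (((continuous_clampI.comp htau).prodMk (continuous_clampI.comp hsR)))
  have wT : Continuous fun p => W (clampI (tauF p), clampI (sT p)) :=
    W.continuous.comp (((continuous_clampI.comp htau).prodMk (continuous_clampI.comp hsT)))
  unfold sqFill
  apply continuous_if_le (hc1.add hc2) continuous_const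
  · exact (continuous_if_le hc2 hc1 wB.continuousOn wL.continuousOn
      (fun p hp => diag_BL hW1 hWs0 hWs1 p hp)).continuousOn
  · exact (continuous_if_le hc2 hc1 wR.continuousOn wT.continuousOn
      (fun p hp => diag_RT hW1 hWs0 hWs1 p hp)).continuousOn
  · intro p hp
    by_cases hts : (p.2 : ℝ) ≤ p.1
    · rw [if_pos hts, if_pos hts]
      exact anti_BR hW1 hWs0 hWs1 p hp hts
    · rw [if_neg hts, if_neg hts]
      exact anti_LT hW1 hWs0 hWs1 p hp hts

end Wlemmas

/-! ### Edge values of the square-filling map -/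

section Edges

variable {W : C(I × I, X)} {α β : Path x x}
variable (hW0 : ∀ sg : I, W (0, sg) = ((α.trans β).trans ((β.trans α).symm)) sg)

include hW0

lemma edge_bottom (s : I) : sqFill W (s, 0) = α s := by
  have hρ : rhoF (s, (0:I)) = 1 := rho_of_snd (by norm_num)
  have hd : dF (s, (0:I)) = 1 := by unfold dF; rw [hρ]; norm_num
  have hτ : tauF (s, (0:I)) = 0 := by unfold tauF; rw [hρ]; norm_num
  have hs0 : (0:ℝ) ≤ s := s.2.1
  have hs1 : (s:ℝ) ≤ 1 := s.2.2
  have hcond1 : ((s, (0:I)).1 : ℝ) + ((s, (0:I)).2 : ℝ) ≤ 1 := by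
    show (s:ℝ) + ((0:I):ℝ) ≤ 1; norm_num [hs1]
  have hcond2 : (((s, (0:I)).2 : ℝ)) ≤ ((s, (0:I)).1 : ℝ) := by
    show ((0:I):ℝ) ≤ (s:ℝ); norm_num [hs0]
  rw [show sqFill W (s, 0) = W (clampI (tauF (s,(0:I))), clampI (sB (s,(0:I)))) from
    by unfold sqFill; rw [if_pos hcond1, if_pos hcond2]]
  have hsB : sB (s, (0:I)) = (s:ℝ)/4 := by
    unfold sB; rw [hd]
    show ((s:ℝ) - ((0:I):ℝ)) / (4 * 1) = (s:ℝ)/4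
    norm_num
  rw [hτ, hsB, clampI_eq_zero le_rfl, clampI_of_mem (by linarith) (by linarith)]
  rw [hW0]
  exact evB α β s _ rfl

lemma edge_top (s : I) : sqFill W (s, 1) = α s := by
  have hρ : rhoF (s, (1:I)) = 1 := rho_of_snd (by norm_num)
  have hd : dF (s, (1:I)) = 1 := by unfold dF; rw [hρ]; norm_num
  have hτ : tauF (s, (1:I)) = 0 := by unfold tauF; rw [hρ]; norm_num
  have hs0 : (0:ℝ) ≤ s := s.2.1
  have hs1 : (s:ℝ) ≤ 1 := s.2.2
  rcases eq_or_lt_of_le hs0 with h0 | h0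
  · -- s = 0 : lower-left branch, σ = 3/4
    have hcond1 : ((s, (1:I)).1 : ℝ) + ((s, (1:I)).2 : ℝ) ≤ 1 := by
      show (s:ℝ) + ((1:I):ℝ) ≤ 1; rw [← h0]; norm_num
    have hcond2 : ¬ (((s, (1:I)).2 : ℝ)) ≤ ((s, (1:I)).1 : ℝ) := by
      show ¬ ((1:I):ℝ) ≤ (s:ℝ); rw [← h0]; norm_num
    rw [show sqFill W (s, 1) = W (clampI (tauF (s,(1:I))), clampI (sL (s,(1:I)))) from
      by unfold sqFill; rw [if_pos hcond1, if_neg hcond2]]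
    have hsL : sL (s, (1:I)) = 3/4 := by
      unfold sL; rw [hd]
      show 3/4 + |1 - (s:ℝ) - ((1:I):ℝ)| / (4 * 1) = 3/4
      rw [show (1 - (s:ℝ) - ((1:I):ℝ)) = -(s:ℝ) by norm_num]
      rw [abs_neg, abs_of_nonneg hs0, ← h0]
      norm_num
    rw [hτ, hsL, clampI_eq_zero le_rfl, clampI_of_mem (by norm_num) (by norm_num)]
    rw [hW0]
    exact evT α β s _ (by show (3/4 : ℝ) = (3 - s)/4; rw [← h0]; norm_num)
  · rcases eq_or_lt_of_le hs1 with h1 | h1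
    · -- s = 1 : upper-right branch, σ = 1/2
      have hcond1 : ¬ ((s, (1:I)).1 : ℝ) + ((s, (1:I)).2 : ℝ) ≤ 1 := by
        show ¬ ((s:ℝ) + ((1:I):ℝ) ≤ 1); rw [h1]; norm_num
      have hcond2 : (((s, (1:I)).2 : ℝ)) ≤ ((s, (1:I)).1 : ℝ) := by
        show ((1:I):ℝ) ≤ (s:ℝ); rw [h1]; norm_num
      rw [show sqFill W (s, 1) = W (clampI (tauF (s,(1:I))), clampI (sR (s,(1:I)))) from
        by unfold sqFill; rw [if_neg hcond1, if_pos hcond2]]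
      have hsR : sR (s, (1:I)) = 1/2 := by
        unfold sR; rw [hd]
        show 1/4 + |(s:ℝ) + ((1:I):ℝ) - 1| / (4 * 1) = 1/2
        rw [show ((s:ℝ) + ((1:I):ℝ) - 1) = (s:ℝ) by norm_num]
        rw [abs_of_nonneg hs0, h1]
        norm_num
      rw [hτ, hsR, clampI_eq_zero le_rfl, clampI_of_mem (by norm_num) (by norm_num)]
      rw [hW0]
      exact evT α β s _ (by show (1/2 : ℝ) = (3 - s)/4; rw [h1]; norm_num)
    · -- 0 < s < 1 : upper-left branch (gT), σ = (3-s)/4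
      have hcond1 : ¬ ((s, (1:I)).1 : ℝ) + ((s, (1:I)).2 : ℝ) ≤ 1 := by
        show ¬ ((s:ℝ) + ((1:I):ℝ) ≤ 1); push_neg; norm_num [h0]
      have hcond2 : ¬ (((s, (1:I)).2 : ℝ)) ≤ ((s, (1:I)).1 : ℝ) := by
        show ¬ ((1:I):ℝ) ≤ (s:ℝ); push_neg; norm_num [h1]
      rw [show sqFill W (s, 1) = W (clampI (tauF (s,(1:I))), clampI (sT (s,(1:I)))) from
        by unfold sqFill; rw [if_neg hcond1, if_neg hcond2]]
      have hsT : sT (s, (1:I)) = (3 - s)/4 := by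
        unfold sT; rw [hd]
        show 1/2 + (((1:I):ℝ) - (s:ℝ)) / (4 * 1) = (3 - s)/4
        norm_num; ring
      rw [hτ, hsT, clampI_eq_zero le_rfl, clampI_of_mem (by linarith) (by linarith)]
      rw [hW0]
      exact evT α β s _ rfl

lemma edge_left (t : I) : sqFill W (0, t) = β t := by
  have hρ : rhoF ((0:I), t) = 1 := rho_of_fst (by norm_num)
  have hd : dF ((0:I), t) = 1 := by unfold dF; rw [hρ]; norm_num
  have hτ : tauF ((0:I), t) = 0 := by unfold tauF; rw [hρ]; norm_num
  have hs0 : (0:ℝ) ≤ t := t.2.1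
  have hs1 : (t:ℝ) ≤ 1 := t.2.2
  have hcond1 : (((0:I), t).1 : ℝ) + (((0:I), t).2 : ℝ) ≤ 1 := by
    show ((0:I):ℝ) + (t:ℝ) ≤ 1; norm_num [hs1]
  rcases eq_or_lt_of_le hs0 with h0 | h0
  · -- t = 0 : bottom branch, σ = 0
    have hcond2 : ((((0:I), t).2 : ℝ)) ≤ (((0:I), t).1 : ℝ) := by
      show (t:ℝ) ≤ ((0:I):ℝ); rw [← h0]; norm_num
    rw [show sqFill W (0, t) = W (clampI (tauF ((0:I),t)), clampI (sB ((0:I),t))) from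
      by unfold sqFill; rw [if_pos hcond1, if_pos hcond2]]
    have hsB : sB ((0:I), t) ≤ 0 := by
      unfold sB; rw [hd]
      show (((0:I):ℝ) - (t:ℝ)) / (4 * 1) ≤ 0
      rw [← h0]; norm_num
    rw [hτ, clampI_eq_zero le_rfl, clampI_eq_zero hsB]
    rw [hW0]
    rw [Path.source, show t = 0 from Subtype.ext h0.symm, Path.source]
  · -- t > 0 : left branch, σ = (4-t)/4
    have hcond2 : ¬ ((((0:I), t).2 : ℝ)) ≤ (((0:I), t).1 : ℝ) := by
      show ¬ (t:ℝ) ≤ ((0:I):ℝ); push_neg; norm_num [h0]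
    rw [show sqFill W (0, t) = W (clampI (tauF ((0:I),t)), clampI (sL ((0:I),t))) from
      by unfold sqFill; rw [if_pos hcond1, if_neg hcond2]]
    have hsL : sL ((0:I), t) = (4 - t)/4 := by
      unfold sL; rw [hd]
      show 3/4 + |1 - ((0:I):ℝ) - (t:ℝ)| / (4 * 1) = (4 - t)/4
      rw [show (1 - ((0:I):ℝ) - (t:ℝ)) = 1 - (t:ℝ) by norm_num]
      rw [abs_of_nonneg (by linarith)]
      ring
    rw [hτ, hsL, clampI_eq_zero le_rfl, clampI_of_mem (by linarith) (by linarith)]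
    rw [hW0]
    exact evL α β t _ rfl

lemma edge_right (t : I) : sqFill W (1, t) = β t := by
  have hρ : rhoF ((1:I), t) = 1 := rho_of_fst (by norm_num)
  have hd : dF ((1:I), t) = 1 := by unfold dF; rw [hρ]; norm_num
  have hτ : tauF ((1:I), t) = 0 := by unfold tauF; rw [hρ]; norm_num
  have hs0 : (0:ℝ) ≤ t := t.2.1
  have hs1 : (t:ℝ) ≤ 1 := t.2.2
  have hcond2 : ((((1:I), t).2 : ℝ)) ≤ (((1:I), t).1 : ℝ) := by
    show (t:ℝ) ≤ ((1:I):ℝ); norm_num [hs1]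
  rcases eq_or_lt_of_le hs0 with h0 | h0
  · -- t = 0 : bottom branch, σ = 1/4
    have hcond1 : (((1:I), t).1 : ℝ) + (((1:I), t).2 : ℝ) ≤ 1 := by
      show ((1:I):ℝ) + (t:ℝ) ≤ 1; rw [← h0]; norm_num
    rw [show sqFill W (1, t) = W (clampI (tauF ((1:I),t)), clampI (sB ((1:I),t))) from
      by unfold sqFill; rw [if_pos hcond1, if_pos hcond2]]
    have hsB : sB ((1:I), t) = 1/4 := by
      unfold sB; rw [hd]
      show (((1:I):ℝ) - (t:ℝ)) / (4 * 1) = 1/4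
      rw [← h0]; norm_num
    rw [hτ, hsB, clampI_eq_zero le_rfl, clampI_of_mem (by norm_num) (by norm_num)]
    rw [hW0]
    exact evR α β t _ (by show (1/4:ℝ) = (1 + t)/4; rw [← h0]; norm_num)
  · -- t > 0 : right branch, σ = (1+t)/4
    have hcond1 : ¬ ((((1:I), t).1 : ℝ) + (((1:I), t).2 : ℝ) ≤ 1) := by
      show ¬ (((1:I):ℝ) + (t:ℝ) ≤ 1); push_neg; norm_num [h0]
    rw [show sqFill W (1, t) = W (clampI (tauF ((1:I),t)), clampI (sR ((1:I),t))) from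
      by unfold sqFill; rw [if_neg hcond1, if_pos hcond2]]
    have hsR : sR ((1:I), t) = (1 + t)/4 := by
      unfold sR; rw [hd]
      show 1/4 + |((1:I):ℝ) + (t:ℝ) - 1| / (4 * 1) = (1 + t)/4
      rw [show (((1:I):ℝ) + (t:ℝ) - 1) = (t:ℝ) by norm_num]
      rw [abs_of_nonneg hs0]
      ring
    rw [hτ, hsR, clampI_eq_zero le_rfl, clampI_of_mem (by linarith) (by linarith)]
    rw [hW0]
    exact evR α β t _ rfl

end Edges

/-! ### Descent to the torus -/

def circExp (s : I) : Circle := Circle.exp (2 * Real.pi * s)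

lemma continuous_circExp : Continuous circExp := by unfold circExp; fun_prop

lemma circExp_zero : circExp 0 = 1 := by simp [circExp]

lemma circExp_surjective : ∀ z : Circle, ∃ s : I, circExp s = z := by
  intro z
  have hπ : (0:ℝ) < 2 * Real.pi := by positivity
  set u := Complex.arg z / (2 * Real.pi) with hu
  refine ⟨⟨Int.fract u, Int.fract_nonneg u, (Int.fract_lt_one u).le⟩, ?_⟩
  show Circle.exp (2 * Real.pi * Int.fract u) = z
  have : Circle.exp (2 * Real.pi * Int.fract u) = Circle.exp (Complex.arg z) :=
    Circle.exp_eq_exp.2 ⟨-⌊u⌋, by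
      rw [Int.fract, hu]
      push_cast
      field_simp
      ring⟩
  rw [this]
  exact Circle.exp_arg z

lemma circExp_eq_cases {s s' : I} (h : circExp s = circExp s') :
    s = s' ∨ (s = 0 ∧ s' = 1) ∨ (s = 1 ∧ s' = 0) := by
  obtain ⟨m, hm⟩ := Circle.exp_eq_exp.1 h
  have hπ : (0:ℝ) < 2 * Real.pi := by positivity
  have hm' : (s:ℝ) = s' + m := by
    have h2 : 2 * Real.pi * s = 2 * Real.pi * ((s':ℝ) + m) := by rw [hm]; ring
    exact mul_left_cancel₀ (ne_of_gt hπ) h2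
  have hb1 : (-1:ℝ) ≤ (m:ℝ) := by
    linarith [s.2.1, s'.2.2, hm']
  have hb2 : ((m:ℝ)) ≤ 1 := by
    linarith [s.2.2, s'.2.1, hm']
  have hcases : m = 0 ∨ m = 1 ∨ m = -1 := by
    have h1 : (-1:ℤ) ≤ m := by exact_mod_cast hb1
    have h2 : m ≤ (1:ℤ) := by exact_mod_cast hb2
    omega
  rcases hcases with h | h | h
  · left
    apply Subtype.ext
    rw [hm', h]
    push_cast
    ring
  · right; right
    subst h
    push_cast at hm'
    constructor
    · apply Subtype.ext
      have := s'.2.1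
      have := s.2.2
      show (s:ℝ) = 1
      linarith
    · apply Subtype.ext
      have := s'.2.1
      have := s.2.2
      show (s':ℝ) = 0
      linarith
  · right; left
    subst h
    push_cast at hm'
    constructor
    · apply Subtype.ext
      have := s'.2.2
      have := s.2.1
      show (s:ℝ) = 0
      linarith
    · apply Subtype.ext
      have := s'.2.2
      have := s.2.1
      show (s':ℝ) = 1
      linarith

/-! ### Backward direction -/

lemma exists_extension_of_homotopic (a b : C(Circle, X)) (ha : a 1 = x) (hb : b 1 = x)
    (h : (⟦(basedLoopOf a ha).trans (basedLoopOf b hb)⟧ : Path.Homotopic.Quotient x x) =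
        ⟦(basedLoopOf b hb).trans (basedLoopOf a ha)⟧) :
    ∃ F : C(Circle × Circle, X),
        (∀ z : Circle, F (z, 1) = a z) ∧ (∀ w : Circle, F (1, w) = b w) := by
  set α := basedLoopOf a ha with hαdef
  set β := basedLoopOf b hb with hβdef
  have hhom : (α.trans β).Homotopic (β.trans α) := Quotient.exact h
  have N : Path.Homotopy ((α.trans β).trans ((β.trans α).symm)) (Path.refl x) :=
    (hhom.some.hcomp (Path.Homotopy.refl ((β.trans α).symm))).trans
      (((Path.Homotopy.reflSymmTrans ((β.trans α).symm)).cast rfl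
        (by rw [Path.symm_symm])).symm)
  set W : C(I × I, X) := N.toContinuousMap with hWdef
  have hW0 : ∀ sg : I, W (0, sg) = ((α.trans β).trans ((β.trans α).symm)) sg := fun sg =>
    N.apply_zero sg
  have hW1 : ∀ sg : I, W (1, sg) = x := fun sg => N.apply_one sg
  have hWs0 : ∀ τ : I, W (τ, 0) = x := fun τ => N.source τ
  have hWs1 : ∀ τ : I, W (τ, 1) = x := fun τ => N.target τ
  have eB := edge_bottom (W := W) (α := α) (β := β) hW0
  have eT := edge_top (W := W) (α := α) (β := β) hW0
  have eL := edge_left (W := W) (α := α) (β := β) hW0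
  have eR := edge_right (W := W) (α := α) (β := β) hW0
  have hBT : ∀ s : I, sqFill W (s, 0) = sqFill W (s, 1) := fun s => (eB s).trans (eT s).symm
  have hLR : ∀ t : I, sqFill W (0, t) = sqFill W (1, t) := fun t => (eL t).trans (eR t).symm
  have hfib : ∀ p p' : I × I, (circExp p.1, circExp p.2) = (circExp p'.1, circExp p'.2) →
      sqFill W p = sqFill W p' := by
    rintro ⟨s, t⟩ ⟨s', t'⟩ hp
    rw [Prod.mk.injEq] at hp
    obtain ⟨h1, h2⟩ := hp
    have step1 : sqFill W (s, t) = sqFill W (s', t) := by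
      rcases circExp_eq_cases h1 with hss | ⟨hs, hs'⟩ | ⟨hs, hs'⟩
      · have h' : s = s' := hss
        rw [h']
      · have h' : s = 0 := hs
        have h'' : s' = 1 := hs'
        rw [h', h'']; exact hLR t
      · have h' : s = 1 := hs
        have h'' : s' = 0 := hs'
        rw [h', h'']; exact (hLR t).symm
    have step2 : sqFill W (s', t) = sqFill W (s', t') := by
      rcases circExp_eq_cases h2 with htt | ⟨ht, ht'⟩ | ⟨ht, ht'⟩
      · have h' : t = t' := htt
        rw [h']
      · have h' : t = 0 := ht
        have h'' : t' = 1 := ht'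
        rw [h', h'']; exact hBT s'
      · have h' : t = 1 := ht
        have h'' : t' = 0 := ht'
        rw [h', h'']; exact (hBT s').symm
    exact step1.trans step2
  set Q : C(I × I, Circle × Circle) :=
    ⟨fun p => (circExp p.1, circExp p.2),
      (continuous_circExp.comp continuous_fst).prodMk
        (continuous_circExp.comp continuous_snd)⟩ with hQdef
  have hsurj : Function.Surjective Q := by
    rintro ⟨z, w⟩
    obtain ⟨s, hs⟩ := circExp_surjective z
    obtain ⟨t, ht⟩ := circExp_surjective w
    exact ⟨(s, t), by simp only [hQdef, ContinuousMap.coe_mk, hs, ht]⟩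
  have hqm : Topology.IsQuotientMap (Q : I × I → Circle × Circle) :=
    (Q.continuous.isClosedMap).isQuotientMap Q.continuous hsurj
  set F0 : Circle × Circle → X := fun z => sqFill W (Function.surjInv hsurj z) with hF0
  have hcomp : ∀ p : I × I, F0 (Q p) = sqFill W p := fun p =>
    hfib _ _ (Function.surjInv_eq hsurj (Q p))
  have hFcont : Continuous F0 := by
    rw [hqm.continuous_iff]
    have heq : F0 ∘ Q = sqFill W := funext hcomp
    rw [heq]
    exact sqFill_continuous hW1 hWs0 hWs1
  refine ⟨⟨F0, hFcont⟩, ?_, ?_⟩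
  · intro z
    obtain ⟨s, hs⟩ := circExp_surjective z
    have hz : ((z, (1:Circle)) : Circle × Circle) = Q (s, 0) := by
      simp only [hQdef, ContinuousMap.coe_mk, hs, circExp_zero]
    show F0 (z, 1) = a z
    rw [hz, hcomp, eB s]
    show a (circExp s) = a z
    rw [hs]
  · intro w
    obtain ⟨t, ht⟩ := circExp_surjective w
    have hw : (((1:Circle), w) : Circle × Circle) = Q (0, t) := by
      simp only [hQdef, ContinuousMap.coe_mk, ht, circExp_zero]
    show F0 (1, w) = b w
    rw [hw, hcomp, eL t]
    show b (circExp t) = b w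
    rw [ht]

end

end TorusExtAux

/-- A map on the wedge of two circles extends over the torus if and only if the
corresponding based loops commute in the fundamental group. -/
theorem exists_torus_extension_iff_commute {X : Type*} [TopologicalSpace X] (x : X)
    (a b : C(Circle, X)) (ha : a 1 = x) (hb : b 1 = x) :
    (∃ F : C(Circle × Circle, X),
        (∀ z : Circle, F (z, 1) = a z) ∧ (∀ w : Circle, F (1, w) = b w)) ↔
      loopClass a ha * loopClass b hb = loopClass b hb * loopClass a ha := by
  constructor
  · rintro ⟨F, hFa, hFb⟩
    exact (TorusExtAux.loopClass_comm_iff a b ha hb).2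
      (TorusExtAux.homotopic_of_extension a b ha hb F hFa hFb)
  · intro h
    exact TorusExtAux.exists_extension_of_homotopic a b ha hb
      ((TorusExtAux.loopClass_comm_iff a b ha hb).1 h)
end

section
/- For a path-connected topological space X with basepoint x, the set of path components of the free loop space of X is in bijection with the set of conjugacy classes of the fundamental group: there is an equivalence ZerothHomotopy C(Circle, X) ≃ ConjClasses (FundamentalGroup X x). -/
open unitInterval Topology CategoryTheory

noncomputable section
namespace ZHAux

attribute [local instance] Path.Homotopic.setoid

/-! ### The circle as `AddCircle 1` -/

abbrev S : Type := AddCircle (1:ℝ)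

def iota (z : S) : I :=
  ⟨(AddCircle.equivIco 1 0 z : ℝ), by
    have h := (AddCircle.equivIco 1 0 z).2
    simp only [zero_add] at h
    exact ⟨h.1, h.2.le⟩⟩

lemma iota_mem (z : S) : ((iota z : I) : ℝ) ∈ Set.Ico (0:ℝ) 1 := by
  have h := (AddCircle.equivIco 1 0 z).2
  simp only [zero_add] at h
  exact h

lemma coe_iota (z : S) : (((iota z : I) : ℝ) : S) = z :=
  (AddCircle.equivIco (1:ℝ) 0).symm_apply_apply z

lemma iota_coe_of_mem {t : ℝ} (ht : t ∈ Set.Ico (0:ℝ) 1) : ((iota (t : S) : I) : ℝ) = t := by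
  have h : (AddCircle.equivIco (1:ℝ) 0) ((t : ℝ) : S) = ⟨t, by rwa [zero_add]⟩ := by
    apply (AddCircle.equivIco (1:ℝ) 0).apply_eq_iff_eq_symm_apply.mpr
    rfl
  simp [iota, h]

/-- The canonical map `I → S`. -/
def cI : C(I, S) := ⟨fun t => ((t : ℝ) : S), (AddCircle.continuous_mk' 1).comp continuous_subtype_val⟩

lemma coe_one_eq_zero : (cI 1) = (0 : S) :=
  show (((1:ℝ)) : S) = 0 from AddCircle.coe_period 1

lemma cI_isQuotientMap : IsQuotientMap (⇑cI) :=
  cI.continuous.isClosedMap.isQuotientMap cI.continuous (fun z => ⟨iota z, coe_iota z⟩)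

lemma iota_zero : iota (0 : S) = 0 := by
  apply Subtype.ext
  have : ((0:ℝ) : S) = (0 : S) := by norm_num
  rw [← this]
  exact iota_coe_of_mem (by norm_num)

lemma loop_iota {X : Type*} [TopologicalSpace X] {a : X} (γ : Path a a) (s : I) :
    γ (iota (cI s)) = γ s := by
  rcases lt_or_eq_of_le s.2.2 with h | h
  · have : ((iota (cI s) : I) : ℝ) = (s : ℝ) := iota_coe_of_mem ⟨s.2.1, h⟩
    congr 1
    exact Subtype.ext this
  · have hs : s = 1 := Subtype.ext h
    subst hs
    have h1 : (cI 1) = ((0:ℝ) : S) := coe_one_eq_zero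
    have : iota (cI 1) = 0 := by
      rw [h1]
      exact Subtype.ext (iota_coe_of_mem (by norm_num))
    rw [this]
    simp [γ.source, γ.target]

variable {X : Type*} [TopologicalSpace X]

/-! ### `loopify` and `basedLoop` -/

/-- The free loop associated to a based loop. -/
def loopify {a : X} (γ : Path a a) : C(S, X) :=
  ⟨fun z => γ (iota z), by
    rw [cI_isQuotientMap.continuous_iff]
    have : (fun z => γ (iota z)) ∘ cI = fun s => γ s := funext fun s => loop_iota γ s
    rw [this]
    exact γ.continuous⟩

lemma loopify_coe {a : X} (γ : Path a a) (s : I) : loopify γ (cI s) = γ s := loop_iota γ s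

/-- The based loop associated to a free loop. -/
def basedLoop (f : C(S, X)) : Path (f 0) (f 0) where
  toFun t := f (cI t)
  continuous_toFun := f.continuous.comp cI.continuous
  source' := by show f (((0:I):ℝ) : S) = f 0; simp
  target' := by
    show f (cI 1) = f 0
    rw [coe_one_eq_zero]

lemma loopify_basedLoop (f : C(S, X)) : loopify (basedLoop f) = f := by
  ext z
  show basedLoop f (iota z) = f z
  show f (cI (iota z)) = f z
  rw [show cI (iota z) = z from coe_iota z]

lemma loopify_zero {a : X} (γ : Path a a) : loopify γ 0 = a := by
  show γ (iota 0) = a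
  rw [iota_zero, γ.source]

/-! ### Rotations -/

/-- Rotation of the circle by a real number. -/
def rot (r : ℝ) : C(S, S) := ⟨fun z => z + ((r : ℝ) : S), by continuity⟩

/-- Any free loop is joined (freely homotopic) to its rotation. -/
lemma joined_rot (f : C(S, X)) (r : ℝ) : Joined f (f.comp (rot r)) := by
  have hc : Continuous fun p : I × S => f (p.2 + (((p.1 : ℝ) * r : ℝ) : S)) := by
    apply f.continuous.comp
    exact continuous_snd.add ((AddCircle.continuous_mk' 1).comp
      ((continuous_subtype_val.comp continuous_fst).mul continuous_const))
  refine ⟨⟨⟨fun t => (ContinuousMap.curry ⟨_, hc⟩) t,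
    (ContinuousMap.curry ⟨_, hc⟩).continuous⟩, ?_, ?_⟩⟩
  · ext z
    show f (z + (((0:ℝ) * r : ℝ) : S)) = f z
    norm_num
  · ext z
    show f (z + (((1:ℝ) * r : ℝ) : S)) = f (z + (r : S))
    norm_num

lemma loopify_trans_rot {a b : X} (p : Path a b) (q : Path b a) :
    (loopify (p.trans q)).comp (rot (1/2)) = loopify (q.trans p) := by
  ext z
  show (p.trans q) (iota (z + (((1:ℝ)/2 : ℝ) : S))) = (q.trans p) (iota z)
  set t : ℝ := ((iota z : I) : ℝ) with hts
  have htm : t ∈ Set.Ico (0:ℝ) 1 := iota_mem z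
  have hz : ((t : ℝ) : S) = z := coe_iota z
  rcases lt_or_ge t (1/2 : ℝ) with h | h
  · have hmem : t + 1/2 ∈ Set.Ico (0:ℝ) 1 := ⟨by linarith [htm.1], by linarith⟩
    have h1 : z + (((1:ℝ)/2 : ℝ) : S) = ((t + 1/2 : ℝ) : S) := by
      rw [← hz]; norm_cast
    rw [h1]
    have h2 : ((iota ((t + 1/2 : ℝ) : S) : I) : ℝ) = t + 1/2 := iota_coe_of_mem hmem
    rw [Path.trans_apply, Path.trans_apply]
    have hiz : ((iota z : I) : ℝ) = t := hts.symm
    split_ifs with h3 h4 h4 <;>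
      first
        | (rw [← p.extend_apply, ← q.extend_apply])
        | (rw [← q.extend_apply, ← p.extend_apply])
        | (rw [← p.extend_apply, ← p.extend_apply])
        | (rw [← q.extend_apply, ← q.extend_apply])
    · rw [h2] at h3
      have ht0 : t = 0 := le_antisymm (by linarith) htm.1
      rw [h2, hiz, ht0]
      norm_num
    · rw [h2] at h3; rw [hiz] at h4; linarith
    · rw [h2, hiz]
      congr 1
      ring
    · rw [hiz] at h4; linarith
  · have hmem : t - 1/2 ∈ Set.Ico (0:ℝ) 1 := ⟨by linarith, by linarith [htm.2]⟩
    have h1 : z + (((1:ℝ)/2 : ℝ) : S) = ((t - 1/2 : ℝ) : S) := by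
      rw [← hz]
      have heq : ((t + 1/2 : ℝ) : S) = ((t - 1/2 : ℝ) : S) := by
        have := AddCircle.coe_add_period 1 (t - 1/2)
        rw [show t - 1/2 + 1 = t + 1/2 by ring] at this
        exact this
      rw [← heq]; norm_cast
    rw [h1]
    have h2 : ((iota ((t - 1/2 : ℝ) : S) : I) : ℝ) = t - 1/2 := iota_coe_of_mem hmem
    rw [Path.trans_apply, Path.trans_apply]
    have hiz : ((iota z : I) : ℝ) = t := hts.symm
    split_ifs with h3 h4 h4 <;>
      first
        | (rw [← p.extend_apply, ← q.extend_apply])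
        | (rw [← q.extend_apply, ← p.extend_apply])
        | (rw [← p.extend_apply, ← p.extend_apply])
        | (rw [← q.extend_apply, ← q.extend_apply])
    · have ht5 : t = 1/2 := by rw [hiz] at h4; linarith
      rw [h2, hiz, ht5]
      norm_num
    · rw [h2, hiz]
      congr 1
      ring
    · rw [h2] at h3; linarith [htm.2]
    · rw [h2] at h3; linarith [htm.2]

/-! ### Homotopic loops give joined free loops -/

lemma prod_isQuotientMap : IsQuotientMap (Prod.map (id : I → I) (⇑cI)) := by
  have hc : Continuous (Prod.map (id : I → I) (⇑cI)) := continuous_id.prodMap cI.continuous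
  exact hc.isClosedMap.isQuotientMap hc (Function.Surjective.prodMap Function.surjective_id
    (fun z => ⟨iota z, coe_iota z⟩))

lemma joined_loopify_of_homotopic {a : X} {γ γ' : Path a a} (h : γ.Homotopic γ') :
    Joined (loopify γ) (loopify γ') := by
  obtain ⟨G⟩ := h
  have hψ : Continuous (fun p : I × S => G (p.1, iota p.2)) := by
    rw [prod_isQuotientMap.continuous_iff]
    have : (fun p : I × S => G (p.1, iota p.2)) ∘ Prod.map id (⇑cI)
        = fun p : I × I => G p := by
      funext p
      show G (p.1, iota (cI p.2)) = G (p.1, p.2)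
      have := loop_iota (G.eval p.1) p.2
      simpa [Path.Homotopy.eval] using this
    rw [this]
    exact G.continuous
  refine ⟨⟨⟨fun t => (ContinuousMap.curry ⟨_, hψ⟩) t, (ContinuousMap.curry ⟨_, hψ⟩).continuous⟩,
    ?_, ?_⟩⟩
  · ext z
    show G (0, iota z) = γ (iota z)
    simp
  · ext z
    show G (1, iota z) = γ' (iota z)
    simp

/-! ### The square lemma -/

instance : ContractibleSpace (I × I) := by
  have h1 : Convex ℝ ((Set.Icc (0:ℝ) 1) ×ˢ (Set.Icc (0:ℝ) 1)) :=
    (convex_Icc 0 1).prod (convex_Icc 0 1)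
  have h2 : ContractibleSpace ((Set.Icc (0:ℝ) 1) ×ˢ (Set.Icc (0:ℝ) 1) : Set (ℝ × ℝ)) :=
    h1.contractibleSpace ⟨(0,0), by norm_num⟩
  exact (Homeomorph.Set.prod (Set.Icc (0:ℝ) 1) (Set.Icc (0:ℝ) 1)).contractibleSpace_iff.mp h2

lemma square_lemma {u v : X} (K : C(I × I, X)) (p q : Path ((0,0) : I × I) ((1,1) : I × I))
    (P Q : Path u v) (hP : ∀ t, K (p t) = P t) (hQ : ∀ t, K (q t) = Q t) :
    P.Homotopic Q := by
  have hu : u = K (0, 0) := by rw [← P.source, ← hP 0, p.source]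
  have hv : v = K (1, 1) := by rw [← P.target, ← hP 1, p.target]
  subst hu hv
  have hPe : P = p.map K.continuous := Path.ext (funext fun t => (hP t).symm)
  have hQe : Q = q.map K.continuous := Path.ext (funext fun t => (hQ t).symm)
  rw [hPe, hQe]
  exact (SimplyConnectedSpace.paths_homotopic p q).map K

/-- the constant-speed identity path on `I` -/
def idI : Path (0:I) 1 := ⟨⟨id, continuous_id⟩, rfl, rfl⟩

/-- A path between free loops yields a conjugating path between the based loops. -/
lemma exists_conj_of_joined {f g : C(S, X)} (h : Joined f g) :
    ∃ c : Path (f 0) (g 0), (basedLoop f).Homotopic (c.trans ((basedLoop g).trans c.symm)) := by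
  obtain ⟨P⟩ := h
  have hK : Continuous (fun p : I × I => P p.1 (cI p.2)) :=
    ContinuousEval.continuous_eval.comp
      ((P.continuous.comp continuous_fst).prodMk (cI.continuous.comp continuous_snd))
  set K : C(I × I, X) := ⟨fun p => P p.1 (cI p.2), hK⟩ with hKdef
  have hcc : Continuous (fun t : I => P t 0) :=
    (ContinuousEvalConst.continuous_eval_const (0:S)).comp P.continuous
  set c : Path (f 0) (g 0) :=
    ⟨⟨fun t => P t 0, hcc⟩, by show P 0 0 = f 0; rw [P.source],
      by show P 1 0 = g 0; rw [P.target]⟩ with hcdef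
  have hsq : ((basedLoop f).trans c).Homotopic (c.trans (basedLoop g)) := by
    apply square_lemma K (((Path.refl (0:I)).prod idI).trans (idI.prod (Path.refl (1:I))))
      ((idI.prod (Path.refl (0:I))).trans ((Path.refl (1:I)).prod idI))
    · intro t
      rw [Path.trans_apply, Path.trans_apply]
      split_ifs with h1
      · show P 0 (cI _) = basedLoop f _
        rw [P.source]; rfl
      · show P _ (cI 1) = P _ 0
        rw [coe_one_eq_zero]
        rfl
    · intro t
      rw [Path.trans_apply, Path.trans_apply]
      split_ifs with h1
      · show P _ (cI 0) = P _ 0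
        norm_num [cI]
        rfl
      · show P 1 (cI _) = basedLoop g _
        rw [P.target]; rfl
  refine ⟨c, ?_⟩
  have h1 : (⟦(basedLoop f).trans c⟧ : Path.Homotopic.Quotient (f 0) (g 0))
      = ⟦c.trans (basedLoop g)⟧ := Quotient.sound hsq
  apply Quotient.exact (s := Path.Homotopic.setoid (f 0) (f 0))
  show (⟦basedLoop f⟧ : Path.Homotopic.Quotient (f 0) (f 0))
      = ⟦c.trans ((basedLoop g).trans c.symm)⟧
  let A : (⟨f 0⟩ : FundamentalGroupoid X) ⟶ ⟨g 0⟩ := ⟦c⟧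
  let Bf : (⟨f 0⟩ : FundamentalGroupoid X) ⟶ ⟨f 0⟩ := ⟦basedLoop f⟧
  let Bg : (⟨g 0⟩ : FundamentalGroupoid X) ⟶ ⟨g 0⟩ := ⟦basedLoop g⟧
  have h2 : Bf ≫ A = A ≫ Bg := by
    show Path.Homotopic.Quotient.trans ⟦basedLoop f⟧ ⟦c⟧
        = Path.Homotopic.Quotient.trans ⟦c⟧ ⟦basedLoop g⟧
    exact h1
  have hinv : (⟦c.symm⟧ : Path.Homotopic.Quotient (g 0) (f 0)) = Groupoid.inv A := rfl
  show Bf = Path.Homotopic.Quotient.trans ⟦c⟧ ⟦(basedLoop g).trans c.symm⟧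
  show Bf = A ≫ (Bg ≫ ⟦c.symm⟧)
  rw [hinv, ← Category.assoc, ← h2]
  simp

/-! ### Groupoid algebra -/

section GroupoidAlgebra
variable {C : Type*} [Groupoid C]

lemma conj_move {x y z : C} (Sf : x ⟶ y) (Sg : x ⟶ z) (Bf : y ⟶ y) (Bg : z ⟶ z) (Cc : y ⟶ z)
    (h : Bf = Cc ≫ Bg ≫ Groupoid.inv Cc) :
    (Sf ≫ Bf ≫ Groupoid.inv Sf) ≫ (Sf ≫ Cc ≫ Groupoid.inv Sg)
      = (Sf ≫ Cc ≫ Groupoid.inv Sg) ≫ (Sg ≫ Bg ≫ Groupoid.inv Sg) := by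
  subst h
  simp [Groupoid.inv_eq_inv]

lemma conj_extract {x y z : C} (Sf : x ⟶ y) (Sg : x ⟶ z) (Bf : y ⟶ y) (Bg : z ⟶ z) (V : x ⟶ x)
    (h : (Sf ≫ Bf ≫ Groupoid.inv Sf) ≫ V = V ≫ (Sg ≫ Bg ≫ Groupoid.inv Sg)) :
    Bf = (Groupoid.inv Sf ≫ V ≫ Sg) ≫ Bg ≫ Groupoid.inv (Groupoid.inv Sf ≫ V ≫ Sg) := by
  simp only [Groupoid.inv_eq_inv] at h ⊢
  simp only [IsIso.inv_comp, IsIso.inv_inv, Category.assoc]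
  simp only [Category.assoc] at h
  rw [← reassoc_of% h]
  simp

lemma cancel_simple {y z : C} (Bg : z ⟶ z) (Cc : y ⟶ z) :
    (Bg ≫ Groupoid.inv Cc) ≫ Cc = Bg := by
  simp [Groupoid.inv_eq_inv]

lemma conj_sur {x : C} (Sf : x ⟶ x) (Bf : x ⟶ x) :
    (Sf ≫ Bf ≫ Groupoid.inv Sf) ≫ Sf = Sf ≫ Bf := by
  simp [Groupoid.inv_eq_inv]

end GroupoidAlgebra

/-! ### The fundamental group -/

/-- Build an element of the fundamental group from an endo-hom of the fundamental groupoid. -/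
def grp (x : X) (u : (⟨x⟩ : FundamentalGroupoid X) ⟶ ⟨x⟩) : FundamentalGroup X x := u

lemma grp_surjective (x : X) : Function.Surjective (grp x) := fun α => ⟨α, rfl⟩

lemma isConj_grp {x : X} {u w v : (⟨x⟩ : FundamentalGroupoid X) ⟶ ⟨x⟩}
    (h : u ≫ v = v ≫ w) : IsConj (grp x u) (grp x w) := by
  refine ⟨toUnits (grp x v), ?_⟩
  show (toUnits (grp x v) : FundamentalGroup X x) * grp x u = grp x w * (toUnits (grp x v))
  rw [val_toUnits_apply]
  exact h

lemma isConj_grp_iff {x : X} {u w : (⟨x⟩ : FundamentalGroupoid X) ⟶ ⟨x⟩} :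
    IsConj (grp x u) (grp x w) ↔ ∃ v, u ≫ v = v ≫ w := by
  constructor
  · rintro ⟨cu, hcu⟩
    refine ⟨(cu : FundamentalGroup X x), ?_⟩
    exact hcu
  · rintro ⟨v, h⟩
    exact isConj_grp h

lemma comp_lift' {a b c' : X} (p : Path a b) (q : Path b c') :
    (⟦p.trans q⟧ : (⟨a⟩ : FundamentalGroupoid X) ⟶ ⟨c'⟩)
      = CategoryStruct.comp (obj := FundamentalGroupoid X)
          (X := ⟨a⟩) (Y := ⟨b⟩) (Z := ⟨c'⟩) ⟦p⟧ ⟦q⟧ :=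
  rfl

lemma symm_lift' {a b : X} (p : Path a b) :
    (⟦p.symm⟧ : (⟨b⟩ : FundamentalGroupoid X) ⟶ ⟨a⟩)
      = Groupoid.inv (X := (⟨a⟩ : FundamentalGroupoid X)) (Y := ⟨b⟩) ⟦p⟧ := rfl

/-! ### The classifying map -/

variable [PathConnectedSpace X]

/-- The conjugacy class associated to a free loop. -/
def FF (x : X) (f : C(S, X)) : ConjClasses (FundamentalGroup X x) :=
  ConjClasses.mk (grp x ⟦(PathConnectedSpace.somePath x (f 0)).trans
    ((basedLoop f).trans (PathConnectedSpace.somePath x (f 0)).symm)⟧)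

lemma FF_eq_of_joined (x : X) {f g : C(S, X)} (h : Joined f g) : FF x f = FF x g := by
  obtain ⟨c, hc⟩ := exists_conj_of_joined h
  apply ConjClasses.mk_eq_mk_iff_isConj.mpr
  apply isConj_grp
    (v := ⟦(PathConnectedSpace.somePath x (f 0)).trans
      (c.trans (PathConnectedSpace.somePath x (g 0)).symm)⟧)
  rw [comp_lift', comp_lift', comp_lift', comp_lift', comp_lift', comp_lift',
    symm_lift', symm_lift']
  apply conj_move
  have h1 : (⟦basedLoop f⟧ : Path.Homotopic.Quotient (f 0) (f 0))
      = ⟦c.trans ((basedLoop g).trans c.symm)⟧ := Quotient.sound hc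
  rw [comp_lift', comp_lift', symm_lift'] at h1
  exact h1

lemma surj_aux {x y : X} (h0 : y = x) (sp : Path x y) (bl : Path y y) (g : Path x x)
    (hbl : ∀ s, bl s = g s) :
    ConjClasses.mk (grp x ⟦sp.trans (bl.trans sp.symm)⟧) = ConjClasses.mk (grp x ⟦g⟧) := by
  subst h0
  have hble : bl = g := Path.ext (funext hbl)
  subst hble
  apply ConjClasses.mk_eq_mk_iff_isConj.mpr
  apply isConj_grp (v := ⟦sp⟧)
  rw [comp_lift', comp_lift', symm_lift']
  exact conj_sur _ _

lemma FF_surjective (x : X) (q : ConjClasses (FundamentalGroup X x)) :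
    ∃ g : Path x x, FF x (loopify g) = q := by
  obtain ⟨a, rfl⟩ := ConjClasses.mk_surjective q
  obtain ⟨u, rfl⟩ := grp_surjective x a
  obtain ⟨g, rfl⟩ := Quotient.exists_rep u
  exact ⟨g, surj_aux (loopify_zero g) _ _ g (fun s => loopify_coe g s)⟩

lemma joined_loopify {a b : X} (al : Path a a) (be : Path b b) (c : Path a b)
    (h : al.Homotopic (c.trans (be.trans c.symm))) : Joined (loopify al) (loopify be) := by
  have J1 : Joined (loopify al) (loopify (c.trans (be.trans c.symm))) :=
    joined_loopify_of_homotopic h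
  have J2 : Joined (loopify (c.trans (be.trans c.symm))) (loopify ((be.trans c.symm).trans c)) := by
    have := joined_rot (loopify (c.trans (be.trans c.symm))) (1/2)
    rwa [loopify_trans_rot] at this
  have J3 : Joined (loopify ((be.trans c.symm).trans c)) (loopify be) := by
    apply joined_loopify_of_homotopic
    apply Quotient.exact (s := Path.Homotopic.setoid b b)
    show (⟦(be.trans c.symm).trans c⟧ : (⟨b⟩ : FundamentalGroupoid X) ⟶ ⟨b⟩) = ⟦be⟧
    rw [comp_lift', comp_lift', symm_lift']
    exact cancel_simple _ _
  exact (J1.trans J2).trans J3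

lemma FF_injective (x : X) {f g : C(S, X)} (h : FF x f = FF x g) : Joined f g := by
  have hic := ConjClasses.mk_eq_mk_iff_isConj.mp h
  obtain ⟨v, hv⟩ := isConj_grp_iff.mp hic
  obtain ⟨et, rfl⟩ := Quotient.exists_rep v
  rw [comp_lift', comp_lift', comp_lift', comp_lift', symm_lift', symm_lift'] at hv
  have key := conj_extract _ _ _ _ _ hv
  rw [← loopify_basedLoop f, ← loopify_basedLoop g]
  apply joined_loopify (basedLoop f) (basedLoop g)
    ((PathConnectedSpace.somePath x (f 0)).symm.trans
      (et.trans (PathConnectedSpace.somePath x (g 0))))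
  apply Quotient.exact (s := Path.Homotopic.setoid (f 0) (f 0))
  show (⟦basedLoop f⟧ : (⟨f 0⟩ : FundamentalGroupoid X) ⟶ ⟨f 0⟩)
    = ⟦((PathConnectedSpace.somePath x (f 0)).symm.trans
        (et.trans (PathConnectedSpace.somePath x (g 0)))).trans
      ((basedLoop g).trans ((PathConnectedSpace.somePath x (f 0)).symm.trans
        (et.trans (PathConnectedSpace.somePath x (g 0)))).symm)⟧
  rw [comp_lift' ((PathConnectedSpace.somePath x (f 0)).symm.trans
        (et.trans (PathConnectedSpace.somePath x (g 0))))
      ((basedLoop g).trans ((PathConnectedSpace.somePath x (f 0)).symm.trans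
        (et.trans (PathConnectedSpace.somePath x (g 0)))).symm),
    comp_lift' (basedLoop g) ((PathConnectedSpace.somePath x (f 0)).symm.trans
        (et.trans (PathConnectedSpace.somePath x (g 0)))).symm,
    symm_lift' ((PathConnectedSpace.somePath x (f 0)).symm.trans
        (et.trans (PathConnectedSpace.somePath x (g 0)))),
    comp_lift' (PathConnectedSpace.somePath x (f 0)).symm
        (et.trans (PathConnectedSpace.somePath x (g 0))),
    comp_lift' et (PathConnectedSpace.somePath x (g 0)),
    symm_lift' (PathConnectedSpace.somePath x (f 0))]
  exact key

/-! ### Conclusion for `C(S, X)` -/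

def zerothFF (x : X) : ZerothHomotopy C(S, X) → ConjClasses (FundamentalGroup X x) :=
  Quotient.lift (FF x) (fun _ _ h => FF_eq_of_joined x h)

lemma zerothFF_bijective (x : X) : Function.Bijective (zerothFF x) := by
  constructor
  · intro a b
    refine Quotient.inductionOn₂ a b ?_
    intro f g h
    exact Quotient.sound (FF_injective x h)
  · intro q
    obtain ⟨g, hg⟩ := FF_surjective x q
    exact ⟨⟦loopify g⟧, hg⟩

/-! ### Transfer to `Circle` -/

lemma joined_map {Y Z : Type*} [TopologicalSpace Y] [TopologicalSpace Z] {a b : Y}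
    {F : Y → Z} (hF : Continuous F) (h : Joined a b) : Joined (F a) (F b) :=
  ⟨h.somePath.map hF⟩

def circleHomeo : S ≃ₜ Circle := AddCircle.homeomorphCircle one_ne_zero

omit [PathConnectedSpace X] in
lemma mapEquiv_aux (f : C(Circle, X)) :
    (f.comp (circleHomeo : C(S, Circle))).comp (circleHomeo.symm : C(Circle, S)) = f := by
  ext z
  simp

omit [PathConnectedSpace X] in
lemma mapEquiv_aux' (g : C(S, X)) :
    (g.comp (circleHomeo.symm : C(Circle, S))).comp (circleHomeo : C(S, Circle)) = g := by
  ext z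
  simp

def mapEquiv (X : Type*) [TopologicalSpace X] : C(Circle, X) ≃ C(S, X) where
  toFun f := f.comp (circleHomeo : C(S, Circle))
  invFun g := g.comp (circleHomeo.symm : C(Circle, S))
  left_inv f := mapEquiv_aux f
  right_inv g := mapEquiv_aux' g

def zerothEquivCircle (X : Type*) [TopologicalSpace X] :
    ZerothHomotopy C(Circle, X) ≃ ZerothHomotopy C(S, X) := by
  refine Quotient.congr (mapEquiv X) (fun f g => ⟨?_, ?_⟩)
  · intro h
    exact joined_map (ContinuousMap.continuous_precomp (circleHomeo : C(S, Circle))) h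
  · intro h
    have h2 := joined_map (ContinuousMap.continuous_precomp (circleHomeo.symm : C(Circle, S))) h
    show Joined f g
    have e1 := mapEquiv_aux (X := X) f
    have e2 := mapEquiv_aux (X := X) g
    rw [show (mapEquiv X f) = f.comp (circleHomeo : C(S, Circle)) from rfl,
      show (mapEquiv X g) = g.comp (circleHomeo : C(S, Circle)) from rfl] at h2
    rwa [e1, e2] at h2

end ZHAux
end

/-- For a path-connected space `X`, the path components of the free loop space
`C(Circle, X)` are in bijection with the conjugacy classes of the fundamental group of
`X`. -/
theorem zerothHomotopy_freeLoopSpace_equiv_conjClasses {X : Type*} [TopologicalSpace X]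
    [PathConnectedSpace X] (x : X) :
    Nonempty (ZerothHomotopy C(Circle, X) ≃ ConjClasses (FundamentalGroup X x)) := by
  exact ⟨(ZHAux.zerothEquivCircle X).trans
    (Equiv.ofBijective _ (ZHAux.zerothFF_bijective x))⟩
end

section
/- Let X be an aspherical topological space and x : X. Let ev : C(Circle, X) → X be evaluation at the basepoint, ev γ = γ 1, which is continuous, and let c_x ∈ C(Circle, X) be the constant loop at x. Then the homomorphism induced by ev on fundamental groups, from FundamentalGroup C(Circle, X) c_x to FundamentalGroup X x, is a group isomorphism. -/
open Set unitInterval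

noncomputable section

namespace LoopAux

variable {Z X : Type*} [TopologicalSpace Z] [TopologicalSpace X]

/-- Parametrize the circle by `ℝ` with period 1. -/
def toC (s : ℝ) : Circle := AddCircle.homeomorphCircle one_ne_zero ((s : ℝ) : AddCircle (1:ℝ))

lemma continuous_toC : Continuous toC :=
  (AddCircle.homeomorphCircle one_ne_zero).continuous.comp (AddCircle.continuous_mk' 1)

lemma toC_zero : toC 0 = 1 := by
  have : ((0:ℝ) : AddCircle (1:ℝ)) = 0 := rfl
  rw [toC, this, AddCircle.homeomorphCircle_apply, AddCircle.toCircle_zero]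

lemma toC_eq_toC {s t : ℝ} (h : ∃ n : ℤ, s - t = n) : toC s = toC t := by
  obtain ⟨n, hn⟩ := h
  have : ((s : ℝ) : AddCircle (1:ℝ)) = t := by
    rw [QuotientAddGroup.eq_iff_sub_mem]
    exact ⟨n, by simp [hn]⟩
  rw [toC, this, toC]

lemma mk_unitFract (s : ℝ) :
    ((toIcoMod (one_pos (α := ℝ)) 0 s : ℝ) : AddCircle (1:ℝ)) = (s : AddCircle (1:ℝ)) := by
  rw [QuotientAddGroup.eq_iff_sub_mem, toIcoMod_sub_self]
  apply AddSubgroup.zsmul_mem_zmultiples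

/-- The fractional part, as an element of the unit interval. -/
def unitFract (s : ℝ) : I :=
  ⟨toIcoMod (one_pos (α := ℝ)) 0 s, by
    have h := toIcoMod_mem_Ico (one_pos (α := ℝ)) 0 s
    rw [zero_add] at h
    exact ⟨h.1, h.2.le⟩⟩

lemma toC_unitFract (s : ℝ) : toC (unitFract s) = toC s := by
  rw [toC, toC, unitFract, mk_unitFract]

lemma unitFract_of_mem {s : ℝ} (h : s ∈ Ico (0:ℝ) 1) : (unitFract s : ℝ) = s := by
  rw [unitFract]
  exact (toIcoMod_eq_self _).mpr (by rwa [zero_add])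

lemma toC_surj : ∀ z : Circle, ∃ s : I, toC (s : ℝ) = z := by
  intro z
  obtain ⟨b, hb⟩ := QuotientAddGroup.mk_surjective
    ((AddCircle.homeomorphCircle (one_ne_zero (α := ℝ))).symm z)
  refine ⟨unitFract b, ?_⟩
  have h1 : toC (unitFract b) = toC b := toC_unitFract b
  have h2 : toC b = z := by
    rw [toC, hb]
    exact (AddCircle.homeomorphCircle (one_ne_zero (α := ℝ))).apply_symm_apply z
  rw [h1, h2]

end LoopAux

namespace LoopAux

variable {Z X : Type*} [TopologicalSpace Z] [TopologicalSpace X]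

instance : Fact ((0:ℝ) < 1) := ⟨zero_lt_one⟩

lemma continuous_unitFract_comp (f : C(Z × I, X)) (hf : ∀ z, f (z, 0) = f (z, 1)) :
    Continuous fun p : Z × ℝ => f (p.1, unitFract p.2) := by
  apply LocallyFinite.continuous (f := fun n : ℤ => (univ : Set Z) ×ˢ Icc (n:ℝ) (n+1))
  · rintro ⟨z, s⟩
    refine ⟨univ ×ˢ Ioo (s-1) (s+1),
      prod_mem_nhds Filter.univ_mem (Ioo_mem_nhds (by linarith) (by linarith)), ?_⟩
    apply Set.Finite.subset (Set.finite_Icc (⌊s⌋ - 2) (⌈s⌉ + 1))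
    rintro n ⟨⟨z', y⟩, ⟨⟨-, hy1, hy2⟩, -, hy3, hy4⟩⟩
    constructor
    · have h1 : (⌊s⌋:ℝ) - 2 ≤ (n:ℝ) := by
        have := Int.floor_le s
        linarith
      exact_mod_cast (by push_cast at h1 ⊢; linarith : ((⌊s⌋ - 2 : ℤ):ℝ) ≤ (n:ℝ))
    · have h1 : (n:ℝ) ≤ (⌈s⌉:ℝ) + 1 := by
        have := Int.le_ceil s
        linarith
      exact_mod_cast (by push_cast at h1 ⊢; linarith : ((n:ℤ):ℝ) ≤ ((⌈s⌉ + 1 : ℤ):ℝ))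
  · apply eq_univ_of_forall
    rintro ⟨z, s⟩
    exact mem_iUnion.mpr ⟨⌊s⌋, ⟨mem_univ _, Int.floor_le s, (Int.lt_floor_add_one s).le⟩⟩
  · exact fun n => isClosed_univ.prod isClosed_Icc
  · intro n
    have hg : Continuous fun p : Z × ℝ => f (p.1, projIcc 0 1 zero_le_one (p.2 - n)) :=
      f.continuous.comp (continuous_fst.prodMk
        (continuous_projIcc.comp (continuous_snd.sub continuous_const)))
    apply (hg.continuousOn).congr
    rintro ⟨z, s⟩ ⟨-, hs1, hs2⟩
    dsimp only at hs1 hs2 ⊢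
    rcases eq_or_lt_of_le hs2 with heq | hlt
    · have h1 : unitFract s = 0 := by
        apply Subtype.ext
        show toIcoMod one_pos 0 s = 0
        have : s - (n+1) • (1:ℝ) = 0 := by push_cast [zsmul_eq_mul] at heq ⊢; linarith
        rw [← toIcoMod_sub_zsmul one_pos 0 s (n+1), this]
        exact (toIcoMod_eq_self _).mpr ⟨le_refl _, by norm_num⟩
      have h2 : projIcc 0 1 zero_le_one (s - n) = 1 := by
        have hs : s - n = 1 := by linarith
        rw [hs]
        ext
        simp [projIcc]
      rw [h1, h2, hf]
    · have h1 : unitFract s = ⟨s - n, by rw [Set.mem_Icc]; exact ⟨by linarith, by linarith⟩⟩ := by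
        apply Subtype.ext
        show toIcoMod one_pos 0 s = s - n
        have e1 := toIcoMod_add_zsmul (one_pos : (0:ℝ) < 1) 0 (s - n) n
        have e2 : s - n + n • (1:ℝ) = s := by push_cast [zsmul_eq_mul]; ring
        have e3 : toIcoMod (one_pos : (0:ℝ) < 1) 0 (s - n) = s - n :=
          (toIcoMod_eq_self (one_pos : (0:ℝ) < 1)).mpr
            (by rw [Set.mem_Ico]; exact ⟨by linarith, by rw [zero_add]; linarith⟩)
        rw [e2] at e1
        rw [e1, e3]
      have h2 : projIcc 0 1 zero_le_one (s - n) =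
          ⟨s - n, by rw [Set.mem_Icc]; exact ⟨by linarith, by linarith⟩⟩ :=
        projIcc_of_mem zero_le_one ⟨by linarith, by linarith⟩
      rw [h1, h2]

end LoopAux

namespace LoopAux

variable {Z X : Type*} [TopologicalSpace Z] [TopologicalSpace X]

/-- A representative in `ℝ` of a point of the circle. -/
def rep (z : Circle) : ℝ :=
  ((AddCircle.equivIco 1 0 ((AddCircle.homeomorphCircle one_ne_zero).symm z)) : ℝ)

lemma unitFract_rep_toC (s : ℝ) : unitFract (rep (toC s)) = unitFract s := by
  have h1 : (AddCircle.homeomorphCircle (one_ne_zero (α := ℝ))).symm (toC s)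
      = ((s : ℝ) : AddCircle (1:ℝ)) :=
    (AddCircle.homeomorphCircle one_ne_zero).symm_apply_apply _
  have h2 : rep (toC s) = toIcoMod (Fact.out : (0:ℝ) < 1) 0 s := by
    rw [rep, h1]
    rfl
  apply Subtype.ext
  show toIcoMod one_pos 0 (rep (toC s)) = toIcoMod one_pos 0 s
  rw [h2]
  exact (toIcoMod_eq_self _).mpr (toIcoMod_mem_Ico _ 0 s)

lemma isOpenQuotientMap_toC : IsOpenQuotientMap toC := by
  refine ⟨?_, continuous_toC, ?_⟩
  · intro z
    obtain ⟨s, hs⟩ := toC_surj z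
    exact ⟨s, hs⟩
  · exact (AddCircle.homeomorphCircle one_ne_zero).isOpenMap.comp
      (QuotientAddGroup.isOpenMap_coe)

/-- Descend a map `Z × I → X` which is 1-periodic in the second variable
to a map `Z × Circle → X`. -/
def periodicLift (f : C(Z × I, X)) (hf : ∀ z, f (z, 0) = f (z, 1)) : C(Z × Circle, X) where
  toFun := fun p => f (p.1, unitFract (rep p.2))
  continuous_toFun := by
    have hq : IsOpenQuotientMap (fun p : Z × ℝ => (p.1, toC p.2)) :=
      IsOpenQuotientMap.id.prodMap isOpenQuotientMap_toC
    rw [← hq.continuous_comp_iff]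
    have : (fun p : Z × Circle => f (p.1, unitFract (rep p.2))) ∘
        (fun p : Z × ℝ => (p.1, toC p.2)) = fun p : Z × ℝ => f (p.1, unitFract p.2) := by
      funext p
      simp only [Function.comp_apply]
      rw [unitFract_rep_toC]
    rw [this]
    exact continuous_unitFract_comp f hf

lemma periodicLift_toC (f : C(Z × I, X)) (hf : ∀ z, f (z, 0) = f (z, 1)) (z : Z) (s : ℝ) :
    periodicLift f hf (z, toC s) = f (z, unitFract s) := by
  show f (z, unitFract (rep (toC s))) = f (z, unitFract s)
  rw [unitFract_rep_toC]

lemma unitFract_I (f : C(Z × I, X)) (hf : ∀ z, f (z, 0) = f (z, 1)) (z : Z) (t : I) :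
    f (z, unitFract (t : ℝ)) = f (z, t) := by
  rcases lt_or_eq_of_le t.2.2 with h | h
  · exact congrArg (fun u => f (z, u)) (Subtype.ext (unitFract_of_mem ⟨t.2.1, h⟩))
  · have ht : t = 1 := Subtype.ext (by rw [h]; rfl)
    have h0 : unitFract ((t : ℝ)) = 0 := by
      apply Subtype.ext
      show toIcoMod one_pos 0 ((t:ℝ)) = 0
      have e1 := toIcoMod_sub_zsmul (one_pos : (0:ℝ) < 1) 0 (t:ℝ) 1
      have e2 : (t:ℝ) - (1:ℤ) • (1:ℝ) = 0 := by rw [zsmul_eq_mul]; push_cast; rw [h]; ring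
      rw [e2] at e1
      rw [← e1]
      exact (toIcoMod_eq_self _).mpr (by rw [Set.mem_Ico]; exact ⟨le_refl _, by norm_num⟩)
    rw [h0, ht, hf]

lemma periodicLift_toC_I (f : C(Z × I, X)) (hf : ∀ z, f (z, 0) = f (z, 1)) (z : Z) (t : I) :
    periodicLift f hf (z, toC (t : ℝ)) = f (z, t) := by
  rw [periodicLift_toC, unitFract_I f hf]

lemma periodicLift_one (f : C(Z × I, X)) (hf : ∀ z, f (z, 0) = f (z, 1)) (z : Z) :
    periodicLift f hf (z, 1) = f (z, 0) := by
  have := periodicLift_toC_I f hf z 0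
  rwa [show ((0:I):ℝ) = (0:ℝ) from rfl, toC_zero] at this

end LoopAux

namespace LoopAux

open ContinuousMap

section Key

universe u

variable {X : Type u} [TopologicalSpace X] {x : X}

/-- Projection of `ℝ` onto the unit interval. -/
def prI : ℝ → I := Set.projIcc 0 1 zero_le_one

lemma continuous_prI : Continuous prI := continuous_projIcc

lemma prI_coe (t : I) : prI (t : ℝ) = t := Set.projIcc_val zero_le_one t

lemma prI_zero : prI 0 = 0 := prI_coe 0

lemma prI_one : prI 1 = 1 := prI_coe 1

variable (Γ : Path (ContinuousMap.const Circle x) (ContinuousMap.const Circle x))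
variable (G : Path.Homotopy
  (Γ.map (ContinuousEvalConst.continuous_eval_const (1 : Circle))) (Path.refl x))

/-- The square `(t, s) ↦ (Ḡ ⬝ Γₜ ⬝ G)(s)`, a genuine 2-sphere in `X`. -/
def Frf : ℝ × ℝ → X := fun p =>
  if p.2 ≤ 1/3 then G (prI (1 - 3*p.2), prI p.1)
  else if p.2 ≤ 2/3 then Γ (prI p.1) (toC (3*p.2 - 1))
  else G (prI (3*p.2 - 2), prI p.1)

lemma G_zero (t : I) : G (0, t) = Γ t 1 := G.apply_zero t

lemma G_one (t : I) : G (1, t) = x := by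
  have := G.apply_one t
  simpa using this

lemma G_src (u : I) : G (u, 0) = x := G.source u

lemma G_tgt (u : I) : G (u, 1) = x := G.target u

lemma Γ_end (z : Circle) : Γ 0 z = x ∧ Γ 1 z = x := by
  constructor
  · rw [Γ.source]; rfl
  · rw [Γ.target]; rfl

lemma continuous_Frf : Continuous (Frf Γ G) := by
  have hG : Continuous fun p : I × I => G p := G.continuous
  have hev : Continuous fun q : C(Circle, X) × Circle => q.1 q.2 := continuous_eval
  have hΓ : Continuous fun p : ℝ × ℝ => Γ (prI p.1) (toC (3*p.2 - 1)) := by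
    have : Continuous fun p : ℝ × ℝ => ((Γ (prI p.1) : C(Circle, X)), toC (3*p.2 - 1)) :=
      (Γ.continuous.comp (continuous_prI.comp continuous_fst)).prodMk
        (continuous_toC.comp ((continuous_const.mul continuous_snd).sub continuous_const))
    exact hev.comp this
  have h1 : Continuous fun p : ℝ × ℝ => G (prI (1 - 3*p.2), prI p.1) := by
    have : Continuous fun p : ℝ × ℝ => ((prI (1 - 3*p.2), prI p.1) : I × I) :=
      (continuous_prI.comp (continuous_const.sub (continuous_const.mul continuous_snd))).prodMk
        (continuous_prI.comp continuous_fst)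
    exact hG.comp this
  have h3 : Continuous fun p : ℝ × ℝ => G (prI (3*p.2 - 2), prI p.1) := by
    have : Continuous fun p : ℝ × ℝ => ((prI (3*p.2 - 2), prI p.1) : I × I) :=
      (continuous_prI.comp ((continuous_const.mul continuous_snd).sub continuous_const)).prodMk
        (continuous_prI.comp continuous_fst)
    exact hG.comp this
  have hinner : Continuous fun p : ℝ × ℝ =>
      if p.2 ≤ 2/3 then Γ (prI p.1) (toC (3*p.2 - 1)) else G (prI (3*p.2 - 2), prI p.1) := by
    apply hΓ.if_le h3 continuous_snd continuous_const
    intro a ha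
    have e1 : (3 : ℝ)*a.2 - 1 = 1 := by rw [ha]; norm_num
    have e2 : (3 : ℝ)*a.2 - 2 = 0 := by rw [ha]; norm_num
    rw [e1, e2, prI_zero, G_zero, toC_eq_toC (t := 0) ⟨1, by norm_num⟩, toC_zero]
  apply h1.if_le hinner continuous_snd continuous_const
  intro a ha
  have e1 : (1 : ℝ) - 3*a.2 = 0 := by rw [ha]; norm_num
  have e2 : (3 : ℝ)*a.2 - 1 = 0 := by rw [ha]; norm_num
  rw [e1, if_pos (by rw [ha]; norm_num : a.2 ≤ 2/3), e2, prI_zero, G_zero, toC_zero]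

lemma frf_tb (s t : ℝ) (h : prI t = 0 ∨ prI t = 1) : Frf Γ G (t, s) = x := by
  have hG : ∀ u : I, G (u, prI t) = x := by
    intro u
    rcases h with h | h <;> rw [h]
    · exact G_src Γ G u
    · exact G_tgt Γ G u
  have hΓ : ∀ z : Circle, Γ (prI t) z = x := by
    intro z
    rcases h with h | h <;> rw [h]
    · exact (Γ_end Γ z).1
    · exact (Γ_end Γ z).2
  unfold Frf
  dsimp only
  split_ifs <;> [exact hG _; exact hΓ _; exact hG _]

lemma frf_s0 (t : ℝ) : Frf Γ G (t, 0) = x := by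
  unfold Frf
  rw [if_pos (by norm_num : (0:ℝ) ≤ 1/3)]
  have : (1 : ℝ) - 3*0 = 1 := by norm_num
  rw [this, prI_one, G_one]

lemma frf_s1 (t : ℝ) : Frf Γ G (t, 1) = x := by
  unfold Frf
  rw [if_neg (by norm_num : ¬ (1:ℝ) ≤ 1/3), if_neg (by norm_num : ¬ (1:ℝ) ≤ 2/3)]
  have : (3 : ℝ)*1 - 2 = 1 := by norm_num
  rw [this, prI_one, G_one]

lemma frf_mid (t s : ℝ) (h0 : 0 ≤ s) (h1 : s ≤ 1) :
    Frf Γ G (t, (1+s)/3) = Γ (prI t) (toC s) := by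
  rcases eq_or_lt_of_le h0 with rfl | hlt
  · unfold Frf
    rw [if_pos (by norm_num : ((1+(0:ℝ))/3 : ℝ) ≤ 1/3)]
    have : (1 : ℝ) - 3*((1+(0:ℝ))/3) = 0 := by norm_num
    rw [this, prI_zero, G_zero, toC_zero]
  · unfold Frf
    rw [if_neg (by dsimp only; linarith : ¬ ((t, (1+s)/3) : ℝ × ℝ).2 ≤ 1/3),
      if_pos (by dsimp only; linarith : ((t, (1+s)/3) : ℝ × ℝ).2 ≤ 2/3)]
    have : (3 : ℝ)*((1+s)/3) - 1 = s := by ring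
    rw [this]

lemma frf_left (t u : ℝ) (h0 : 0 ≤ u) (h1 : u ≤ 1) :
    Frf Γ G (t, (1-u)/3) = G (prI u, prI t) := by
  unfold Frf
  rw [if_pos (by dsimp only; linarith : ((t, (1-u)/3) : ℝ × ℝ).2 ≤ 1/3)]
  have : (1 : ℝ) - 3*((1-u)/3) = u := by ring
  rw [this]

lemma frf_right (t u : ℝ) (h0 : 0 ≤ u) (h1 : u ≤ 1) :
    Frf Γ G (t, (2+u)/3) = G (prI u, prI t) := by
  rcases eq_or_lt_of_le h0 with rfl | hlt
  · unfold Frf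
    rw [if_neg (by norm_num : ¬ ((2+(0:ℝ))/3 : ℝ) ≤ 1/3),
      if_pos (by norm_num : ((2+(0:ℝ))/3 : ℝ) ≤ 2/3)]
    have : (3 : ℝ)*((2+(0:ℝ))/3) - 1 = 1 := by norm_num
    rw [this, toC_eq_toC (t := 0) ⟨1, by norm_num⟩, toC_zero, prI_zero, G_zero]
  · unfold Frf
    rw [if_neg (by dsimp only; linarith : ¬ ((t, (2+u)/3) : ℝ × ℝ).2 ≤ 1/3),
      if_neg (by dsimp only; linarith : ¬ ((t, (2+u)/3) : ℝ × ℝ).2 ≤ 2/3)]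
    have : (3 : ℝ)*((2+u)/3) - 2 = u := by ring
    rw [this]

end Key

end LoopAux

namespace LoopAux

open ContinuousMap

universe u

theorem key {X : Type u} [TopologicalSpace X] {x : X}
    (hX2 : Subsingleton (HomotopyGroup (Fin 2) X x))
    (Γ : Path (ContinuousMap.const Circle x) (ContinuousMap.const Circle x))
    (hΓ : (Γ.map (ContinuousEvalConst.continuous_eval_const (1 : Circle))).Homotopic
      (Path.refl x)) :
    Γ.Homotopic (Path.refl (ContinuousMap.const Circle x)) := by
  obtain ⟨G⟩ := hΓ
  have contF : Continuous (Frf Γ G) := continuous_Frf Γ G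
  -- the square as a continuous map on `I × I`
  have cFI : Continuous fun p : I × I => Frf Γ G ((p.1 : ℝ), (p.2 : ℝ)) :=
    contF.comp ((continuous_subtype_val.comp continuous_fst).prodMk
      (continuous_subtype_val.comp continuous_snd))
  let FI : C(I × I, X) := ⟨fun p => Frf Γ G ((p.1 : ℝ), (p.2 : ℝ)), cFI⟩
  have hFI : ∀ t : I, FI (t, 0) = FI (t, 1) := fun t => by
    show Frf Γ G ((t:ℝ), ((0:I):ℝ)) = Frf Γ G ((t:ℝ), ((1:I):ℝ))
    rw [show ((0:I):ℝ) = (0:ℝ) from rfl, show ((1:I):ℝ) = (1:ℝ) from rfl,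
      frf_s0, frf_s1]
  let PL : C(I × Circle, X) := periodicLift FI hFI
  have PLtoC : ∀ (t : I) (s : I), PL (t, toC (s:ℝ)) = Frf Γ G ((t:ℝ), (s:ℝ)) :=
    fun t s => periodicLift_toC_I FI hFI t s
  have prI0 : prI ((0:I):ℝ) = 0 := prI_coe 0
  have prI1 : prI ((1:I):ℝ) = 1 := prI_coe 1
  have hsrc : PL.curry 0 = ContinuousMap.const Circle x := by
    ext z
    obtain ⟨s, hs⟩ := toC_surj z
    rw [← hs]
    show PL (0, toC (s:ℝ)) = x
    rw [PLtoC 0 s]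
    exact frf_tb Γ G _ _ (Or.inl prI0)
  have htgt : PL.curry 1 = ContinuousMap.const Circle x := by
    ext z
    obtain ⟨s, hs⟩ := toC_surj z
    rw [← hs]
    show PL (1, toC (s:ℝ)) = x
    rw [PLtoC 1 s]
    exact frf_tb Γ G _ _ (Or.inr prI1)
  let Γ' : Path (ContinuousMap.const Circle x) (ContinuousMap.const Circle x) :=
    { toContinuousMap := PL.curry
      source' := hsrc
      target' := htgt }
  -- the generalized 2-loop
  have cgen : Continuous fun y : Fin 2 → I => Frf Γ G ((y 0 : ℝ), (y 1 : ℝ)) :=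
    contF.comp ((continuous_subtype_val.comp (continuous_apply 0)).prodMk
      (continuous_subtype_val.comp (continuous_apply 1)))
  let Fgen : GenLoop (Fin 2) X x :=
    ⟨⟨fun y => Frf Γ G ((y 0 : ℝ), (y 1 : ℝ)), cgen⟩, by
      rintro y ⟨i, hi⟩
      fin_cases i
      · replace hi : y 0 = 0 ∨ y 0 = 1 := hi
        show Frf Γ G ((y 0 : ℝ), (y 1 : ℝ)) = x
        refine frf_tb Γ G _ _ ?_
        rcases hi with h | h <;> rw [h]
        · exact Or.inl prI0
        · exact Or.inr prI1
      · replace hi : y 1 = 0 ∨ y 1 = 1 := hi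
        show Frf Γ G ((y 0 : ℝ), (y 1 : ℝ)) = x
        rcases hi with h | h <;> rw [h]
        · exact frf_s0 Γ G _
        · exact frf_s1 Γ G _⟩
  have heq : (Quotient.mk (GenLoop.Homotopic.setoid (Fin 2) x) Fgen :
      HomotopyGroup (Fin 2) X x) = Quotient.mk _ GenLoop.const := @Subsingleton.elim _ hX2 _ _
  obtain ⟨Φ⟩ : GenLoop.Homotopic Fgen GenLoop.const := Quotient.exact heq
  -- step 1 : Γ is homotopic to Γ'
  let φr : I → I → ℝ := fun u s => ((1 - (u:ℝ)) + (s:ℝ) * (1 + 2*(u:ℝ)))/3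
  have cφr : Continuous fun p : (I × I) × I => ((p.1.2 : ℝ), φr p.1.1 p.2) := by
    have cu : Continuous fun p : (I × I) × I => (p.1.1 : ℝ) :=
      continuous_subtype_val.comp (continuous_fst.comp continuous_fst)
    have cs : Continuous fun p : (I × I) × I => (p.2 : ℝ) :=
      continuous_subtype_val.comp continuous_snd
    have ct : Continuous fun p : (I × I) × I => (p.1.2 : ℝ) :=
      continuous_subtype_val.comp (continuous_snd.comp continuous_fst)
    exact ct.prodMk (((continuous_const.sub cu).add
      (cs.mul (continuous_const.add (continuous_const.mul cu)))).div_const 3)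
  let Ψsq : C((I × I) × I, X) := ⟨fun p => Frf Γ G ((p.1.2 : ℝ), φr p.1.1 p.2),
    contF.comp cφr⟩
  have hΨ : ∀ z : I × I, Ψsq (z, 0) = Ψsq (z, 1) := by
    rintro ⟨u, t⟩
    show Frf Γ G ((t:ℝ), φr u 0) = Frf Γ G ((t:ℝ), φr u 1)
    have e0 : φr u 0 = (1 - (u:ℝ))/3 := by
      show ((1 - (u:ℝ)) + ((0:I):ℝ) * (1 + 2*(u:ℝ)))/3 = _
      rw [show ((0:I):ℝ) = (0:ℝ) from rfl]; ring
    have e1 : φr u 1 = (2 + (u:ℝ))/3 := by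
      show ((1 - (u:ℝ)) + ((1:I):ℝ) * (1 + 2*(u:ℝ)))/3 = _
      rw [show ((1:I):ℝ) = (1:ℝ) from rfl]; ring
    rw [e0, e1, frf_left Γ G _ _ u.2.1 u.2.2, frf_right Γ G _ _ u.2.1 u.2.2]
  let PΨ : C((I × I) × Circle, X) := periodicLift Ψsq hΨ
  have PΨtoC : ∀ (z : I × I) (s : I), PΨ (z, toC (s:ℝ)) = Ψsq (z, s) :=
    fun z s => periodicLift_toC_I Ψsq hΨ z s
  have homA : Γ.Homotopy Γ' :=
    { toContinuousMap := PΨ.curry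
      map_zero_left := by
        intro t
        ext z
        obtain ⟨s, hs⟩ := toC_surj z
        rw [← hs]
        show PΨ ((0, t), toC (s:ℝ)) = Γ t (toC (s:ℝ))
        rw [PΨtoC (0, t) s]
        show Frf Γ G ((t:ℝ), φr 0 s) = _
        have e : φr 0 s = (1 + (s:ℝ))/3 := by
          show ((1 - ((0:I):ℝ)) + (s:ℝ) * (1 + 2*((0:I):ℝ)))/3 = _
          rw [show ((0:I):ℝ) = (0:ℝ) from rfl]; ring
        rw [e, frf_mid Γ G _ _ s.2.1 s.2.2, prI_coe]
      map_one_left := by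
        intro t
        ext z
        obtain ⟨s, hs⟩ := toC_surj z
        rw [← hs]
        show PΨ ((1, t), toC (s:ℝ)) = Γ' t (toC (s:ℝ))
        rw [PΨtoC (1, t) s]
        show Frf Γ G ((t:ℝ), φr 1 s) = PL (t, toC (s:ℝ))
        have e : φr 1 s = (s:ℝ) := by
          show ((1 - ((1:I):ℝ)) + (s:ℝ) * (1 + 2*((1:I):ℝ)))/3 = _
          rw [show ((1:I):ℝ) = (1:ℝ) from rfl]; ring
        rw [e, PLtoC t s]
      prop' := by
        intro u t ht
        have hx : ∀ w : Circle, PΨ.curry (u, t) w = x := by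
          intro w
          obtain ⟨s, hs⟩ := toC_surj w
          rw [← hs]
          show PΨ ((u, t), toC (s:ℝ)) = x
          rw [PΨtoC (u, t) s]
          refine frf_tb Γ G _ _ ?_
          rcases ht with h | h
          · rw [h]; exact Or.inl prI0
          · rw [Set.mem_singleton_iff.mp h]; exact Or.inr prI1
        have hΓt : ∀ w : Circle, Γ t w = x := by
          intro w
          rcases ht with h | h
          · rw [h, Γ.source]; rfl
          · rw [Set.mem_singleton_iff.mp h, Γ.target]; rfl
        ext w
        show PΨ.curry (u, t) w = Γ t w
        rw [hx w, hΓt w] }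
  -- step 2 : Γ' is homotopic to the constant path
  let cub : I → I → (Fin 2 → I) := fun t s => fun j => if j = 0 then t else s
  have cub0 : ∀ t s, cub t s 0 = t := fun t s => if_pos rfl
  have cub1 : ∀ t s, cub t s 1 = s := fun t s => if_neg (by decide)
  have cΦ : Continuous fun p : (I × I) × I => Φ (p.1.1, cub p.1.2 p.2) := by
    apply Φ.continuous.comp
    apply Continuous.prodMk (continuous_fst.comp continuous_fst)
    apply continuous_pi
    intro j
    by_cases h : j = 0
    · simp only [cub, h, if_pos]
      exact continuous_snd.comp continuous_fst
    · simp only [cub, h, if_neg, if_false]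
      exact continuous_snd
  let Φsq : C((I × I) × I, X) := ⟨fun p => Φ (p.1.1, cub p.1.2 p.2), cΦ⟩
  have Φbd : ∀ (u : I) (y : Fin 2 → I), y ∈ Cube.boundary (Fin 2) →
      Φ (u, y) = Frf Γ G ((y 0 : ℝ), (y 1 : ℝ)) :=
    fun u y hy => Φ.eq_fst u hy
  have hΦ : ∀ z : I × I, Φsq (z, 0) = Φsq (z, 1) := by
    rintro ⟨u, t⟩
    show Φ (u, cub t 0) = Φ (u, cub t 1)
    rw [Φbd u _ ⟨1, Or.inl (cub1 t 0)⟩, Φbd u _ ⟨1, Or.inr (cub1 t 1)⟩]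
    rw [cub0, cub1, cub0, cub1]
    rw [show ((0:I):ℝ) = (0:ℝ) from rfl, show ((1:I):ℝ) = (1:ℝ) from rfl,
      frf_s0, frf_s1]
  let PΦ : C((I × I) × Circle, X) := periodicLift Φsq hΦ
  have PΦtoC : ∀ (z : I × I) (s : I), PΦ (z, toC (s:ℝ)) = Φsq (z, s) :=
    fun z s => periodicLift_toC_I Φsq hΦ z s
  have homB : Γ'.Homotopy (Path.refl (ContinuousMap.const Circle x)) :=
    { toContinuousMap := PΦ.curry
      map_zero_left := by
        intro t
        ext z
        obtain ⟨s, hs⟩ := toC_surj z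
        rw [← hs]
        show PΦ ((0, t), toC (s:ℝ)) = Γ' t (toC (s:ℝ))
        rw [PΦtoC (0, t) s]
        show Φ (0, cub t s) = PL (t, toC (s:ℝ))
        rw [PLtoC t s]
        have := Φ.apply_zero (cub t s)
        rw [this]
        show Frf Γ G ((cub t s 0 : ℝ), (cub t s 1 : ℝ)) = _
        rw [cub0, cub1]
      map_one_left := by
        intro t
        ext z
        obtain ⟨s, hs⟩ := toC_surj z
        rw [← hs]
        show PΦ ((1, t), toC (s:ℝ)) = x
        rw [PΦtoC (1, t) s]
        show Φ (1, cub t s) = x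
        rw [Φ.apply_one (cub t s)]
        rfl
      prop' := by
        intro u t ht
        have ht' : t = 0 ∨ t = 1 := by
          rcases ht with h | h
          · exact Or.inl h
          · exact Or.inr (Set.mem_singleton_iff.mp h)
        have hx : ∀ w : Circle, PΦ.curry (u, t) w = x := by
          intro w
          obtain ⟨s, hs⟩ := toC_surj w
          rw [← hs]
          show PΦ ((u, t), toC (s:ℝ)) = x
          rw [PΦtoC (u, t) s]
          show Φ (u, cub t s) = x
          rw [Φbd u _ ⟨0, by rw [cub0]; exact ht'⟩]
          refine frf_tb Γ G _ _ ?_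
          rcases ht' with h | h <;> rw [h]
          · exact Or.inl prI0
          · exact Or.inr prI1
        have hΓ't : ∀ w : Circle, Γ' t w = x := by
          intro w
          rcases ht' with h | h
          · rw [h, Γ'.source]; rfl
          · rw [h, Γ'.target]; rfl
        ext w
        show PΦ.curry (u, t) w = Γ' t w
        rw [hx w, hΓ't w] }
  exact ⟨homA.trans homB⟩

end LoopAux

universe u

open CategoryTheory

attribute [local instance] Path.Homotopic.setoid

/-- The homomorphism on fundamental groups induced by a continuous map `f : C(X, Y)`,
sending the class of a loop `γ` at `x` to the class of `f ∘ γ` at `f x`. -/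
noncomputable def FundamentalGroup.inducedHom {X Y : Type u} [TopologicalSpace X]
    [TopologicalSpace Y] (f : C(X, Y)) (x : X) :
    FundamentalGroup X x →* FundamentalGroup Y (f x) :=
  (FundamentalGroupoid.fundamentalGroupoidFunctor.map
    (X := TopCat.of X) (Y := TopCat.of Y) (TopCat.ofHom f)).mapEnd (FundamentalGroupoid.mk x)

/-- For an aspherical space `X` with basepoint `x`, evaluation at the basepoint of the
circle induces an isomorphism from the fundamental group of the free loop space
`C(Circle, X)` based at the constant loop at `x` onto the fundamental group of `X` at
`x`. -/
theorem evaluation_inducedHom_bijective {X : Type u} [TopologicalSpace X]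
    (hX : ∀ n : ℕ, 2 ≤ n → ∀ x : X, Subsingleton (HomotopyGroup (Fin n) X x)) (x : X) :
    Function.Bijective
      (FundamentalGroup.inducedHom
        (⟨fun γ : C(Circle, X) => γ 1, ContinuousEvalConst.continuous_eval_const 1⟩ :
          C(C(Circle, X), X))
        (ContinuousMap.const Circle x)) := by
  set ev : C(C(Circle, X), X) :=
    ⟨fun γ : C(Circle, X) => γ 1, ContinuousEvalConst.continuous_eval_const 1⟩ with hev
  set c : C(Circle, X) := ContinuousMap.const Circle x with hc
  constructor
  · rw [injective_iff_map_eq_one]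
    intro a ha
    obtain ⟨p, hp⟩ := Quotient.exists_rep (a : Path.Homotopic.Quotient c c)
    have ha' : ((FundamentalGroup.inducedHom ev c) a : Path.Homotopic.Quotient (ev c) (ev c))
        = (1 : FundamentalGroup X (ev c)) :=
      ha
    have hmap : ((FundamentalGroup.inducedHom ev c) a : Path.Homotopic.Quotient (ev c) (ev c))
        = (FundamentalGroupoid.fundamentalGroupoidFunctor.map
            (X := TopCat.of (C(Circle, X))) (Y := TopCat.of X) (TopCat.ofHom ev)).map a := by
      rfl
    rw [hmap, ← hp] at ha'
    have hone : (1 : FundamentalGroup X (ev c)) = ⟦Path.refl x⟧ := rfl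
    rw [hone] at ha'
    have hmm : (FundamentalGroupoid.fundamentalGroupoidFunctor.map
        (X := TopCat.of (C(Circle, X))) (Y := TopCat.of X) (TopCat.ofHom ev)).map
          (⟦p⟧ : Path.Homotopic.Quotient c c)
        = ⟦p.map ev.continuous⟧ := rfl
    replace ha' : (⟦p.map ev.continuous⟧ : Path.Homotopic.Quotient x x) = ⟦Path.refl x⟧ :=
      hmm.symm.trans ha'
    have hΓ : (p.map (ContinuousEvalConst.continuous_eval_const (1 : Circle))).Homotopic
        (Path.refl x) := Quotient.exact ha'
    have hkey : p.Homotopic (Path.refl c) := LoopAux.key (hX 2 le_rfl x) p hΓ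
    show a = (1 : FundamentalGroup (C(Circle, X)) c)
    rw [← hp]
    exact Quotient.sound hkey
  · intro b
    obtain ⟨α, hα⟩ := Quotient.exists_rep (b : Path.Homotopic.Quotient (ev c) (ev c))
    let κ : C(X, C(Circle, X)) :=
      ContinuousMap.curry ⟨fun p : X × Circle => p.1, continuous_fst⟩
    let Γα : Path c c :=
      { toContinuousMap := κ.comp α.toContinuousMap
        source' := ContinuousMap.ext fun z => α.source
        target' := ContinuousMap.ext fun z => α.target }
    refine ⟨(⟦Γα⟧ : Path.Homotopic.Quotient c c), ?_⟩
    show (FundamentalGroupoid.fundamentalGroupoidFunctor.map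
        (X := TopCat.of (C(Circle, X))) (Y := TopCat.of X) (TopCat.ofHom ev)).map
          (⟦Γα⟧ : Path.Homotopic.Quotient c c) = b
    rw [← hα]
    have : Γα.map ev.continuous = α := by
      ext t
      rfl
    exact (rfl : _ = ⟦Γα.map ev.continuous⟧).trans
      (congrArg (Quotient.mk (Path.Homotopic.setoid _ _)) this)
end
end
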